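/- arXiv:2312.13464 — 12 statements merged into one kernel-verified Lean document; each statement's English description precedes it below -/
import Mathlib

section
/- For every nonempty set 𝒜 of tuples over E of length at most |E|, the ideal I_𝒜 of 𝔖⁺(E) is self-adjoint (closed under the involution *), and Δ(I_𝒜) ⊆ I_𝒜 ⊗ 𝔖⁺(E) + 𝔖⁺(E) ⊗ I_𝒜; consequently the coproduct Δ of 𝔖⁺(E) descends to a coproduct on the quotient 𝔊_𝒜 = 𝔖⁺(E)/I_𝒜, so that 𝔊_𝒜 is a quantum permutation group on E. -/
/-!
STATEMENT 2: For every nonempty set 𝒜 of tuples over E of length at most |E|, the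
ideal I_𝒜 of 𝔖⁺(E) is self-adjoint, and Δ(I_𝒜) ⊆ I_𝒜 ⊗ 𝔖⁺(E) + 𝔖⁺(E) ⊗ I_𝒜;
consequently the coproduct descends to 𝔊_𝒜 = 𝔖⁺(E)/I_𝒜.

We model ℂ⟨E²⟩ as the free ℂ-algebra on E × E (whose star operation reverses words and
fixes the generators `u_{ij}`), the quantum symmetric group 𝔖⁺(E) as its quotient by the
two-sided ideal `IE E`, and the ideal I_𝒜 of 𝔖⁺(E) by its preimage `qIdeal E 𝒜` in
ℂ⟨E²⟩, namely the two-sided ideal generated by the relations of `𝔖⁺(E)` together with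
the elements `u_{AB}` with exactly one of A, B in 𝒜.  Self-adjointness of I_𝒜 is
closure of this preimage under star, and the containment
Δ(I_𝒜) ⊆ I_𝒜 ⊗ 𝔖⁺(E) + 𝔖⁺(E) ⊗ I_𝒜 is membership of Δ₀(x), for x ∈ qIdeal E 𝒜, in the
ℂ-submodule of ℂ⟨E²⟩ ⊗ ℂ⟨E²⟩ spanned by the pure tensors with one leg in `qIdeal E 𝒜`
(whose image in 𝔖⁺(E) ⊗ 𝔖⁺(E) is exactly I_𝒜 ⊗ 𝔖⁺(E) + 𝔖⁺(E) ⊗ I_𝒜).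
-/

open scoped TensorProduct

noncomputable section

/-- The generator `u_{ij}` of `ℂ⟨E²⟩`. -/
def u (E : Type) (i j : E) : FreeAlgebra ℂ (E × E) :=
  FreeAlgebra.ι ℂ (i, j)

/-- The defining relations of the quantum symmetric group `𝔖⁺(E)`. -/
def symRels (E : Type) [Fintype E] : Set (FreeAlgebra ℂ (E × E)) :=
  {x | ∃ i j : E, x = u E i j * u E i j - u E i j} ∪
  {x | ∃ i k l : E, k ≠ l ∧ x = u E i k * u E i l} ∪
  {x | ∃ j k l : E, k ≠ l ∧ x = u E k j * u E l j} ∪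
  {x | ∃ j : E, x = (∑ k : E, u E k j) - 1} ∪
  {x | ∃ i : E, x = (∑ k : E, u E i k) - 1}

/-- For tuples `A B : Fin k → E`, the (ordered, noncommutative) product
`u_{AB} = u_{a₁b₁} ⋯ u_{a_k b_k}`. -/
def uProd (E : Type) {k : ℕ} (A B : Fin k → E) : FreeAlgebra ℂ (E × E) :=
  (List.ofFn fun t => u E (A t) (B t)).prod

/-- Tuples of elements of `E` (of arbitrary length). -/
abbrev Tup (E : Type) := Σ k : ℕ, Fin k → E

/-- The elements `u_{AB}` where exactly one of the tuples `A`, `B` lies in `𝒜`. -/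
def tupleGens (E : Type) (𝒜 : Set (Tup E)) : Set (FreeAlgebra ℂ (E × E)) :=
  {x | ∃ (k : ℕ) (A B : Fin k → E),
    Xor' (⟨k, A⟩ ∈ 𝒜) (⟨k, B⟩ ∈ 𝒜) ∧ x = uProd E A B}

/-- The preimage in `ℂ⟨E²⟩` of the ideal `I_𝒜` of `𝔖⁺(E)`. -/
def qIdeal (E : Type) [Fintype E] (𝒜 : Set (Tup E)) :
    TwoSidedIdeal (FreeAlgebra ℂ (E × E)) :=
  TwoSidedIdeal.span (symRels E ∪ tupleGens E 𝒜)

/-- The coproduct `Δ` at the level of `ℂ⟨E²⟩`: the unital algebra homomorphism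
determined by `Δ(u_{ij}) = Σ_{k∈E} u_{ik} ⊗ u_{kj}`. -/
def Delta (E : Type) [Fintype E] :
    FreeAlgebra ℂ (E × E) →ₐ[ℂ] FreeAlgebra ℂ (E × E) ⊗[ℂ] FreeAlgebra ℂ (E × E) :=
  FreeAlgebra.lift ℂ (fun p : E × E => ∑ k : E, u E p.1 k ⊗ₜ[ℂ] u E k p.2)

set_option linter.unusedSectionVars false

/-! ### Generic machinery: ordered and reversed products of a matrix of elements of a ring -/

namespace QPG

attribute [local instance] Classical.propDecidable

lemma star_lprod {R : Type} [Monoid R] [StarMul R] (l : List R) :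
    star l.prod = (l.map star).reverse.prod := by
  induction l with
  | nil => simp
  | cons a l ih =>
    rw [List.prod_cons, star_mul, ih, List.map_cons, List.reverse_cons, List.prod_append,
      List.prod_cons, List.prod_nil, mul_one]

section Generic

variable (E : Type) [Fintype E] (Q : Type) [Ring Q] (v : E → E → Q)

lemma sum_pi_succ {M : Type} [AddCommMonoid M] {k : ℕ} (f : (Fin (k+1) → E) → M) :
    ∑ C : Fin (k+1) → E, f C = ∑ c : E, ∑ C : Fin k → E, f (Fin.cons c C) := by
  rw [← (Fin.consEquiv fun _ : Fin (k+1) => E).sum_comp f, Fintype.sum_prod_type]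
  rfl

def row {k : ℕ} (A B : Fin k → E) : List Q := List.ofFn fun t => v (A t) (B t)

lemma row_cons {k : ℕ} (a b : E) (A B : Fin k → E) :
    row E Q v (Fin.cons a A) (Fin.cons b B) = v a b :: row E Q v A B := by
  unfold row
  rw [List.ofFn_succ]
  simp [Fin.cons_succ, Fin.cons_zero]

def w {k : ℕ} (A B : Fin k → E) : Q := (row E Q v A B).prod

def wrev {k : ℕ} (A B : Fin k → E) : Q := (row E Q v A B).reverse.prod

lemma w_nil (A B : Fin 0 → E) : w E Q v A B = 1 := by unfold w row; simp

lemma wrev_nil (A B : Fin 0 → E) : wrev E Q v A B = 1 := by unfold wrev row; simp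

lemma w_cons {k : ℕ} (a b : E) (A B : Fin k → E) :
    w E Q v (Fin.cons a A) (Fin.cons b B) = v a b * w E Q v A B := by
  unfold w; rw [row_cons, List.prod_cons]

lemma wrev_cons {k : ℕ} (a b : E) (A B : Fin k → E) :
    wrev E Q v (Fin.cons a A) (Fin.cons b B) = wrev E Q v A B * v a b := by
  unfold wrev
  rw [row_cons, List.reverse_cons, List.prod_append, List.prod_cons, List.prod_nil, mul_one]

lemma D1 (hd1 : ∀ a b : E, ∑ c : E, v c a * v c b = if a = b then 1 else 0)
    (k : ℕ) (A B : Fin k → E) :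
    ∑ C : Fin k → E, wrev E Q v C A * w E Q v C B = if A = B then 1 else 0 := by
  induction k with
  | zero =>
    rw [if_pos (Subsingleton.elim A B), Fintype.sum_unique, w_nil, wrev_nil, mul_one]
  | succ k ih =>
    induction A using Fin.consCases with | _ a₀ A' => ?_
    induction B using Fin.consCases with | _ b₀ B' => ?_
    rw [sum_pi_succ]
    have step : ∀ c : E, ∑ C : Fin k → E,
        wrev E Q v (Fin.cons c C) (Fin.cons a₀ A') * w E Q v (Fin.cons c C) (Fin.cons b₀ B')
        = ∑ C : Fin k → E, wrev E Q v C A' * (v c a₀ * v c b₀) * w E Q v C B' := by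
      intro c
      refine Finset.sum_congr rfl fun C _ => ?_
      rw [wrev_cons, w_cons]
      simp only [mul_assoc]
    rw [Finset.sum_congr rfl fun c _ => step c, Finset.sum_comm]
    have step2 : ∀ C : Fin k → E,
        ∑ c : E, wrev E Q v C A' * (v c a₀ * v c b₀) * w E Q v C B'
        = wrev E Q v C A' * (if a₀ = b₀ then (1:Q) else 0) * w E Q v C B' := by
      intro C
      rw [← Finset.sum_mul, ← Finset.mul_sum, hd1]
    rw [Finset.sum_congr rfl fun C _ => step2 C]
    by_cases hab : a₀ = b₀
    · subst hab
      have step3 : ∀ C : Fin k → E,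
          wrev E Q v C A' * (if a₀ = a₀ then (1:Q) else 0) * w E Q v C B'
          = wrev E Q v C A' * w E Q v C B' := fun C => by rw [if_pos rfl, mul_one]
      rw [Finset.sum_congr rfl fun C _ => step3 C, ih A' B']
      by_cases hAB : A' = B'
      · subst hAB; rw [if_pos rfl, if_pos rfl]
      · rw [if_neg hAB,
          if_neg (fun h => hAB ((Fin.cons_inj.mp h).2))]
    · have step3 : ∀ C : Fin k → E,
          wrev E Q v C A' * (if a₀ = b₀ then (1:Q) else 0) * w E Q v C B' = 0 :=
        fun C => by rw [if_neg hab, mul_zero, zero_mul]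
      rw [Finset.sum_congr rfl fun C _ => step3 C, Finset.sum_const_zero,
        if_neg (fun h => hab ((Fin.cons_inj.mp h).1))]

lemma D2 (hd2 : ∀ a b : E, ∑ c : E, v a c * v b c = if a = b then 1 else 0)
    (k : ℕ) (A B : Fin k → E) :
    ∑ C : Fin k → E, w E Q v A C * wrev E Q v B C = if A = B then 1 else 0 := by
  induction k with
  | zero =>
    rw [if_pos (Subsingleton.elim A B), Fintype.sum_unique, w_nil, wrev_nil, mul_one]
  | succ k ih =>
    induction A using Fin.consCases with | _ a₀ A' => ?_
    induction B using Fin.consCases with | _ b₀ B' => ?_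
    rw [sum_pi_succ]
    have step : ∀ c : E,
        ∑ C : Fin k → E,
          w E Q v (Fin.cons a₀ A') (Fin.cons c C) * wrev E Q v (Fin.cons b₀ B') (Fin.cons c C)
        = v a₀ c * (if A' = B' then (1:Q) else 0) * v b₀ c := by
      intro c
      have e1 : ∀ C : Fin k → E,
          w E Q v (Fin.cons a₀ A') (Fin.cons c C) * wrev E Q v (Fin.cons b₀ B') (Fin.cons c C)
          = v a₀ c * (w E Q v A' C * wrev E Q v B' C) * v b₀ c := by
        intro C
        rw [w_cons, wrev_cons]
        simp only [mul_assoc]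
      rw [Finset.sum_congr rfl fun C _ => e1 C]
      rw [← Finset.sum_mul, ← Finset.mul_sum, ih A' B']
    rw [Finset.sum_congr rfl fun c _ => step c]
    by_cases hAB : A' = B'
    · subst hAB
      have e2 : ∀ c : E,
          v a₀ c * (if A' = A' then (1:Q) else 0) * v b₀ c = v a₀ c * v b₀ c :=
        fun c => by rw [if_pos rfl, mul_one]
      rw [Finset.sum_congr rfl fun c _ => e2 c, hd2]
      by_cases hab : a₀ = b₀
      · subst hab; rw [if_pos rfl, if_pos rfl]
      · rw [if_neg hab, if_neg (fun h => hab ((Fin.cons_inj.mp h).1))]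
    · have e2 : ∀ c : E,
          v a₀ c * (if A' = B' then (1:Q) else 0) * v b₀ c = 0 :=
        fun c => by rw [if_neg hAB, mul_zero, zero_mul]
      rw [Finset.sum_congr rfl fun c _ => e2 c, Finset.sum_const_zero,
        if_neg (fun h => hAB ((Fin.cons_inj.mp h).2))]

lemma wrev_zero_abstract
    (hd1 : ∀ a b : E, ∑ c : E, v c a * v c b = if a = b then 1 else 0)
    (hd2 : ∀ a b : E, ∑ c : E, v a c * v b c = if a = b then 1 else 0)
    {k : ℕ} (P : (Fin k → E) → Prop)
    (hw1 : ∀ C D : Fin k → E, P C → ¬ P D → w E Q v C D = 0)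
    (hw2 : ∀ C D : Fin k → E, ¬ P C → P D → w E Q v C D = 0)
    (A B : Fin k → E) (hA : P A) (hB : ¬ P B) :
    wrev E Q v A B = 0 := by
  classical
  set S : Finset (Fin k → E) := Finset.univ.filter P with hS
  have memS : ∀ {C : Fin k → E}, C ∈ S ↔ P C := by
    intro C; simp [hS]
  have claim1 : ∀ D : Fin k → E, P D →
      ∑ C ∈ S, wrev E Q v C B * w E Q v C D = 0 := by
    intro D hD
    have htot := D1 E Q v hd1 k B D
    rw [if_neg (show ¬ (B = D) from fun h => hB (by rw [h]; exact hD))] at htot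
    rw [← Finset.sum_filter_add_sum_filter_not Finset.univ P
      (fun C => wrev E Q v C B * w E Q v C D)] at htot
    have hT0 : ∑ C ∈ Finset.univ.filter (fun C => ¬ P C),
        wrev E Q v C B * w E Q v C D = 0 := by
      refine Finset.sum_eq_zero fun C hC => ?_
      rw [hw2 C D (Finset.mem_filter.mp hC).2 hD, mul_zero]
    rw [hT0, add_zero] at htot
    exact htot
  have inner : ∀ C : Fin k → E, P C →
      ∑ D ∈ S, w E Q v C D * wrev E Q v A D = if C = A then 1 else 0 := by
    intro C hC
    have htot := D2 E Q v hd2 k C A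
    rw [← Finset.sum_filter_add_sum_filter_not Finset.univ P
      (fun D => w E Q v C D * wrev E Q v A D)] at htot
    have hT0 : ∑ D ∈ Finset.univ.filter (fun D => ¬ P D),
        w E Q v C D * wrev E Q v A D = 0 := by
      refine Finset.sum_eq_zero fun D hD => ?_
      rw [hw1 C D hC (Finset.mem_filter.mp hD).2, zero_mul]
    rw [hT0, add_zero] at htot
    exact htot
  have main : (0:Q) = ∑ C ∈ S, wrev E Q v C B * (if C = A then 1 else 0) := by
    calc (0:Q) = ∑ D ∈ S, (∑ C ∈ S, wrev E Q v C B * w E Q v C D) * wrev E Q v A D := by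
          refine (Finset.sum_eq_zero fun D hD => ?_).symm
          rw [claim1 D (memS.mp hD), zero_mul]
      _ = ∑ D ∈ S, ∑ C ∈ S, wrev E Q v C B * (w E Q v C D * wrev E Q v A D) := by
          refine Finset.sum_congr rfl fun D _ => ?_
          rw [Finset.sum_mul]
          exact Finset.sum_congr rfl fun C _ => by rw [mul_assoc]
      _ = ∑ C ∈ S, ∑ D ∈ S, wrev E Q v C B * (w E Q v C D * wrev E Q v A D) :=
          Finset.sum_comm
      _ = ∑ C ∈ S, wrev E Q v C B * (∑ D ∈ S, w E Q v C D * wrev E Q v A D) := by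
          refine Finset.sum_congr rfl fun C _ => ?_
          rw [Finset.mul_sum]
      _ = ∑ C ∈ S, wrev E Q v C B * (if C = A then 1 else 0) := by
          refine Finset.sum_congr rfl fun C hC => by rw [inner C (memS.mp hC)]
  have final : ∑ C ∈ S, wrev E Q v C B * (if C = A then 1 else 0) = wrev E Q v A B := by
    have e : ∀ C : Fin k → E, wrev E Q v C B * (if C = A then (1:Q) else 0)
        = if C = A then wrev E Q v C B else 0 := by
      intro C
      by_cases h : C = A
      · rw [if_pos h, if_pos h, mul_one]
      · rw [if_neg h, if_neg h, mul_zero]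
    rw [Finset.sum_congr rfl fun C _ => e C, Finset.sum_ite_eq' S A (fun C => wrev E Q v C B),
      if_pos (memS.mpr hA)]
  rw [← final, ← main]

end Generic

/-! ### The quotient by `qIdeal` and the instantiated relations -/

variable (E : Type) [Fintype E] (𝒜 : Set (Tup E))

abbrev Q := (qIdeal E 𝒜).ringCon.Quotient

def pi : FreeAlgebra ℂ (E × E) →+* Q E 𝒜 := RingCon.mk' _

lemma pi_eq_zero_iff (x : FreeAlgebra ℂ (E × E)) :
    pi E 𝒜 x = 0 ↔ x ∈ qIdeal E 𝒜 := by
  rw [TwoSidedIdeal.mem_iff]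
  change _ ↔ (qIdeal E 𝒜).ringCon x 0
  rw [← RingCon.eq]
  rfl

def v (i j : E) : Q E 𝒜 := pi E 𝒜 (u E i j)

lemma idem_mem (i j : E) : u E i j * u E i j - u E i j ∈ qIdeal E 𝒜 :=
  TwoSidedIdeal.subset_span (Or.inl (Or.inl (Or.inl (Or.inl (Or.inl ⟨i, j, rfl⟩)))))

lemma rowPair_mem {i k l : E} (h : k ≠ l) : u E i k * u E i l ∈ qIdeal E 𝒜 :=
  TwoSidedIdeal.subset_span (Or.inl (Or.inl (Or.inl (Or.inl (Or.inr ⟨i, k, l, h, rfl⟩)))))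

lemma colPair_mem {j k l : E} (h : k ≠ l) : u E k j * u E l j ∈ qIdeal E 𝒜 :=
  TwoSidedIdeal.subset_span (Or.inl (Or.inl (Or.inl (Or.inr ⟨j, k, l, h, rfl⟩))))

lemma colSum_mem (j : E) : (∑ k : E, u E k j) - 1 ∈ qIdeal E 𝒜 :=
  TwoSidedIdeal.subset_span (Or.inl (Or.inl (Or.inr ⟨j, rfl⟩)))

lemma rowSum_mem (i : E) : (∑ k : E, u E i k) - 1 ∈ qIdeal E 𝒜 :=
  TwoSidedIdeal.subset_span (Or.inl (Or.inr ⟨i, rfl⟩))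

lemma tupleGen_mem {k : ℕ} {A B : Fin k → E}
    (h : Xor' ((⟨k, A⟩ : Tup E) ∈ 𝒜) ((⟨k, B⟩ : Tup E) ∈ 𝒜)) :
    uProd E A B ∈ qIdeal E 𝒜 :=
  TwoSidedIdeal.subset_span (Or.inr ⟨k, A, B, h, rfl⟩)

lemma v_idem (i j : E) : v E 𝒜 i j * v E 𝒜 i j = v E 𝒜 i j := by
  have := (pi_eq_zero_iff E 𝒜 _).2 (idem_mem E 𝒜 i j)
  rw [map_sub, map_mul, sub_eq_zero] at this
  exact this

lemma v_row {i k l : E} (h : k ≠ l) : v E 𝒜 i k * v E 𝒜 i l = 0 := by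
  have := (pi_eq_zero_iff E 𝒜 _).2 (rowPair_mem E 𝒜 (i := i) h)
  rwa [map_mul] at this

lemma v_col {j k l : E} (h : k ≠ l) : v E 𝒜 k j * v E 𝒜 l j = 0 := by
  have := (pi_eq_zero_iff E 𝒜 _).2 (colPair_mem E 𝒜 (j := j) h)
  rwa [map_mul] at this

lemma v_colSum (j : E) : ∑ k : E, v E 𝒜 k j = 1 := by
  have := (pi_eq_zero_iff E 𝒜 _).2 (colSum_mem E 𝒜 j)
  rw [map_sub, map_sum, map_one, sub_eq_zero] at this
  exact this

lemma v_rowSum (i : E) : ∑ k : E, v E 𝒜 i k = 1 := by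
  have := (pi_eq_zero_iff E 𝒜 _).2 (rowSum_mem E 𝒜 i)
  rw [map_sub, map_sum, map_one, sub_eq_zero] at this
  exact this

lemma d1 (a b : E) : ∑ c : E, v E 𝒜 c a * v E 𝒜 c b = if a = b then 1 else 0 := by
  by_cases h : a = b
  · subst h
    rw [if_pos rfl]
    calc ∑ c : E, v E 𝒜 c a * v E 𝒜 c a = ∑ c : E, v E 𝒜 c a := by
          refine Finset.sum_congr rfl fun c _ => v_idem E 𝒜 c a
      _ = 1 := v_colSum E 𝒜 a
  · rw [if_neg h]
    refine Finset.sum_eq_zero fun c _ => v_row E 𝒜 (i := c) h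

lemma d2 (a b : E) : ∑ c : E, v E 𝒜 a c * v E 𝒜 b c = if a = b then 1 else 0 := by
  by_cases h : a = b
  · subst h
    rw [if_pos rfl]
    calc ∑ c : E, v E 𝒜 a c * v E 𝒜 a c = ∑ c : E, v E 𝒜 a c := by
          refine Finset.sum_congr rfl fun c _ => v_idem E 𝒜 a c
      _ = 1 := v_rowSum E 𝒜 a
  · rw [if_neg h]
    refine Finset.sum_eq_zero fun c _ => v_col E 𝒜 (j := c) h

lemma pi_uProd {k : ℕ} (A B : Fin k → E) :
    pi E 𝒜 (uProd E A B) = w E (Q E 𝒜) (v E 𝒜) A B := by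
  unfold uProd w row
  rw [map_list_prod, List.map_ofFn]
  rfl

lemma pi_uProdRev {k : ℕ} (A B : Fin k → E) :
    pi E 𝒜 ((List.ofFn fun t => u E (A t) (B t)).reverse.prod)
      = wrev E (Q E 𝒜) (v E 𝒜) A B := by
  unfold wrev row
  rw [map_list_prod, List.map_reverse, List.map_ofFn]
  rfl

lemma w_xor_zero {k : ℕ} {A B : Fin k → E}
    (h : Xor' ((⟨k, A⟩ : Tup E) ∈ 𝒜) ((⟨k, B⟩ : Tup E) ∈ 𝒜)) :
    w E (Q E 𝒜) (v E 𝒜) A B = 0 := by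
  rw [← pi_uProd]
  exact (pi_eq_zero_iff E 𝒜 _).2 (tupleGen_mem E 𝒜 h)

lemma uRev_mem {k : ℕ} (A B : Fin k → E)
    (h : Xor' ((⟨k, A⟩ : Tup E) ∈ 𝒜) ((⟨k, B⟩ : Tup E) ∈ 𝒜)) :
    (List.ofFn fun t => u E (A t) (B t)).reverse.prod ∈ qIdeal E 𝒜 := by
  rw [← pi_eq_zero_iff, pi_uProdRev]
  rcases h with ⟨hA, hB⟩ | ⟨hB, hA⟩
  · exact wrev_zero_abstract E (Q E 𝒜) (v E 𝒜) (d1 E 𝒜) (d2 E 𝒜)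
      (fun C : Fin k → E => (⟨k, C⟩ : Tup E) ∈ 𝒜)
      (fun C D hC hD => w_xor_zero E 𝒜 (Or.inl ⟨hC, hD⟩))
      (fun C D hC hD => w_xor_zero E 𝒜 (Or.inr ⟨hD, hC⟩))
      A B hA hB
  · exact wrev_zero_abstract E (Q E 𝒜) (v E 𝒜) (d1 E 𝒜) (d2 E 𝒜)
      (fun C : Fin k → E => (⟨k, C⟩ : Tup E) ∉ 𝒜)
      (fun C D hC hD => w_xor_zero E 𝒜 (Or.inr ⟨not_not.mp hD, hC⟩))
      (fun C D hC hD => w_xor_zero E 𝒜 (Or.inl ⟨not_not.mp hC, hD⟩))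
      A B hA (not_not.mpr hB)

lemma star_u (i j : E) : star (u E i j) = u E i j := FreeAlgebra.star_ι (R := ℂ) ((i, j))

lemma star_uProd {k : ℕ} (A B : Fin k → E) :
    star (uProd E A B) = (List.ofFn fun t => u E (A t) (B t)).reverse.prod := by
  unfold uProd
  rw [star_lprod, List.map_ofFn]
  have : (star ∘ fun t : Fin k => u E (A t) (B t)) = fun t : Fin k => u E (A t) (B t) := by
    funext t
    exact star_u E (A t) (B t)
  rw [this]

/-- Part 1: the ideal `qIdeal E 𝒜` is star-closed. -/
theorem star_mem_qIdeal : ∀ x ∈ qIdeal E 𝒜, star x ∈ qIdeal E 𝒜 := by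
  intro x hx
  let K : TwoSidedIdeal (FreeAlgebra ℂ (E × E)) :=
    TwoSidedIdeal.mk' {y | star y ∈ qIdeal E 𝒜}
      (by simp only [Set.mem_setOf_eq, star_zero]; exact TwoSidedIdeal.zero_mem _)
      (fun {a b} ha hb => by
        simp only [Set.mem_setOf_eq, star_add] at *
        exact TwoSidedIdeal.add_mem _ ha hb)
      (fun {a} ha => by
        simp only [Set.mem_setOf_eq, star_neg] at *
        exact TwoSidedIdeal.neg_mem _ ha)
      (fun {a b} hb => by
        simp only [Set.mem_setOf_eq, star_mul] at *
        exact TwoSidedIdeal.mul_mem_right _ _ _ hb)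
      (fun {a b} ha => by
        simp only [Set.mem_setOf_eq, star_mul] at *
        exact TwoSidedIdeal.mul_mem_left _ _ _ ha)
  have hsub : symRels E ∪ tupleGens E 𝒜 ⊆ (K : Set (FreeAlgebra ℂ (E × E))) := by
    rintro g (((((⟨i, j, rfl⟩ | ⟨i, k, l, hkl, rfl⟩) | ⟨j, k, l, hkl, rfl⟩) | ⟨j, rfl⟩) |
        ⟨i, rfl⟩) | ⟨k, A, B, hx, rfl⟩) <;>
      rw [SetLike.mem_coe, TwoSidedIdeal.mem_mk', Set.mem_setOf_eq]
    · rw [star_sub, star_mul, star_u]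
      exact idem_mem E 𝒜 i j
    · rw [star_mul, star_u, star_u]
      exact rowPair_mem E 𝒜 (i := i) hkl.symm
    · rw [star_mul, star_u, star_u]
      exact colPair_mem E 𝒜 (j := j) hkl.symm
    · rw [star_sub, star_one, star_sum]
      rw [show ∑ k : E, star (u E k j) = ∑ k : E, u E k j from
        Finset.sum_congr rfl fun k _ => star_u E k j]
      exact colSum_mem E 𝒜 j
    · rw [star_sub, star_one, star_sum]
      rw [show ∑ k : E, star (u E i k) = ∑ k : E, u E i k from
        Finset.sum_congr rfl fun k _ => star_u E i k]
      exact rowSum_mem E 𝒜 i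
    · rw [star_uProd]
      exact uRev_mem E 𝒜 A B hx
  have hxK : x ∈ K := TwoSidedIdeal.mem_span_iff.mp hx K hsub
  rwa [TwoSidedIdeal.mem_mk', Set.mem_setOf_eq] at hxK

end QPG

/-! ### Part 2: the coproduct maps the ideal into `I ⊗ H + H ⊗ I` -/

namespace QPG

attribute [local instance] Classical.propDecidable

variable (E : Type) [Fintype E] (𝒜 : Set (Tup E))

def MSub : Submodule ℂ (FreeAlgebra ℂ (E × E) ⊗[ℂ] FreeAlgebra ℂ (E × E)) :=
  Submodule.span ℂ
    {z : FreeAlgebra ℂ (E × E) ⊗[ℂ] FreeAlgebra ℂ (E × E) |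
      ∃ a b : FreeAlgebra ℂ (E × E),
        (a ∈ qIdeal E 𝒜 ∨ b ∈ qIdeal E 𝒜) ∧ z = a ⊗ₜ[ℂ] b}

lemma tmul_mem_left {a : FreeAlgebra ℂ (E × E)} (b : FreeAlgebra ℂ (E × E))
    (ha : a ∈ qIdeal E 𝒜) : a ⊗ₜ[ℂ] b ∈ MSub E 𝒜 :=
  Submodule.subset_span ⟨a, b, Or.inl ha, rfl⟩

lemma tmul_mem_right (a : FreeAlgebra ℂ (E × E)) {b : FreeAlgebra ℂ (E × E)}
    (hb : b ∈ qIdeal E 𝒜) : a ⊗ₜ[ℂ] b ∈ MSub E 𝒜 :=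
  Submodule.subset_span ⟨a, b, Or.inr hb, rfl⟩

lemma MSub_mul_left (z : FreeAlgebra ℂ (E × E) ⊗[ℂ] FreeAlgebra ℂ (E × E))
    {y} (hy : y ∈ MSub E 𝒜) : z * y ∈ MSub E 𝒜 := by
  induction hy using Submodule.span_induction with
  | mem x hx =>
    obtain ⟨a, b, hab, rfl⟩ := hx
    induction z using TensorProduct.induction_on with
    | zero => rw [zero_mul]; exact Submodule.zero_mem _
    | tmul c d =>
      rw [Algebra.TensorProduct.tmul_mul_tmul]
      rcases hab with h | h
      · exact tmul_mem_left E 𝒜 _ (TwoSidedIdeal.mul_mem_left _ _ _ h)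
      · exact tmul_mem_right E 𝒜 _ (TwoSidedIdeal.mul_mem_left _ _ _ h)
    | add z₁ z₂ h1 h2 => rw [add_mul]; exact Submodule.add_mem _ h1 h2
  | zero => rw [mul_zero]; exact Submodule.zero_mem _
  | add x y hx hy px py => rw [mul_add]; exact Submodule.add_mem _ px py
  | smul r x hx px => rw [mul_smul_comm]; exact Submodule.smul_mem _ _ px

lemma MSub_mul_right (z : FreeAlgebra ℂ (E × E) ⊗[ℂ] FreeAlgebra ℂ (E × E))
    {y} (hy : y ∈ MSub E 𝒜) : y * z ∈ MSub E 𝒜 := by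
  induction hy using Submodule.span_induction with
  | mem x hx =>
    obtain ⟨a, b, hab, rfl⟩ := hx
    induction z using TensorProduct.induction_on with
    | zero => rw [mul_zero]; exact Submodule.zero_mem _
    | tmul c d =>
      rw [Algebra.TensorProduct.tmul_mul_tmul]
      rcases hab with h | h
      · exact tmul_mem_left E 𝒜 _ (TwoSidedIdeal.mul_mem_right _ _ _ h)
      · exact tmul_mem_right E 𝒜 _ (TwoSidedIdeal.mul_mem_right _ _ _ h)
    | add z₁ z₂ h1 h2 => rw [mul_add]; exact Submodule.add_mem _ h1 h2
  | zero => rw [zero_mul]; exact Submodule.zero_mem _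
  | add x y hx hy px py => rw [add_mul]; exact Submodule.add_mem _ px py
  | smul r x hx px => rw [smul_mul_assoc]; exact Submodule.smul_mem _ _ px

lemma Delta_u (i j : E) :
    Delta E (u E i j) = ∑ c : E, u E i c ⊗ₜ[ℂ] u E c j := by
  unfold Delta u
  rw [FreeAlgebra.lift_ι_apply]

lemma uProd_nil (A B : Fin 0 → E) : uProd E A B = 1 :=
  w_nil E (FreeAlgebra ℂ (E × E)) (u E) A B

lemma uProd_cons {k : ℕ} (a b : E) (A B : Fin k → E) :
    uProd E (Fin.cons a A) (Fin.cons b B) = u E a b * uProd E A B :=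
  w_cons E (FreeAlgebra ℂ (E × E)) (u E) a b A B

lemma Delta_uProd {k : ℕ} (A B : Fin k → E) :
    Delta E (uProd E A B) = ∑ C : Fin k → E, uProd E A C ⊗ₜ[ℂ] uProd E C B := by
  induction k with
  | zero =>
    rw [Finset.sum_congr rfl fun C _ => by
      rw [uProd_nil E A C, uProd_nil E C B]]
    rw [Fintype.sum_unique, uProd_nil E A B, map_one, Algebra.TensorProduct.one_def]
  | succ k ih =>
    induction A using Fin.consCases with | _ a₀ A' => ?_
    induction B using Fin.consCases with | _ b₀ B' => ?_
    rw [uProd_cons, map_mul, Delta_u, ih, Finset.sum_mul_sum,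
      sum_pi_succ E
        (f := fun C => uProd E (Fin.cons a₀ A') C ⊗ₜ[ℂ] uProd E C (Fin.cons b₀ B'))]
    refine Finset.sum_congr rfl fun c _ => Finset.sum_congr rfl fun C' _ => ?_
    rw [Algebra.TensorProduct.tmul_mul_tmul, uProd_cons, uProd_cons]

lemma Delta_symRels_mem : ∀ g ∈ symRels E, Delta E g ∈ MSub E 𝒜 := by
  rintro g ((((⟨i, j, rfl⟩ | ⟨i, k, l, hkl, rfl⟩) | ⟨j, k, l, hkl, rfl⟩) | ⟨j, rfl⟩) | ⟨i, rfl⟩)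
  · -- idempotents
    rw [map_sub, map_mul, Delta_u, Finset.sum_mul_sum]
    have e1 : ∀ c d : E, (u E i c ⊗ₜ[ℂ] u E c j) * (u E i d ⊗ₜ[ℂ] u E d j)
        = (u E i c * u E i d) ⊗ₜ[ℂ] (u E c j * u E d j) := fun c d =>
      Algebra.TensorProduct.tmul_mul_tmul _ _ _ _
    rw [Finset.sum_congr rfl fun c _ => Finset.sum_congr rfl fun d _ => e1 c d,
      ← Finset.sum_sub_distrib]
    refine Submodule.sum_mem _ fun c _ => ?_
    rw [← Finset.add_sum_erase Finset.univ _ (Finset.mem_univ c)]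
    have key : (u E i c * u E i c) ⊗ₜ[ℂ] (u E c j * u E c j) - u E i c ⊗ₜ[ℂ] u E c j
        = (u E i c * u E i c - u E i c) ⊗ₜ[ℂ] (u E c j * u E c j)
          + u E i c ⊗ₜ[ℂ] (u E c j * u E c j - u E c j) := by
      rw [TensorProduct.sub_tmul, TensorProduct.tmul_sub]
      abel
    rw [add_sub_right_comm, key]
    refine Submodule.add_mem _ (Submodule.add_mem _ ?_ ?_) ?_
    · exact tmul_mem_left E 𝒜 _ (idem_mem E 𝒜 i c)
    · exact tmul_mem_right E 𝒜 _ (idem_mem E 𝒜 c j)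
    · refine Submodule.sum_mem _ fun d hd => ?_
      exact tmul_mem_left E 𝒜 _
        (rowPair_mem E 𝒜 (i := i) (Finset.ne_of_mem_erase hd).symm)
  · -- row pairs
    rw [map_mul, Delta_u, Delta_u, Finset.sum_mul_sum]
    refine Submodule.sum_mem _ fun c _ => Submodule.sum_mem _ fun d _ => ?_
    rw [Algebra.TensorProduct.tmul_mul_tmul]
    by_cases hcd : c = d
    · subst hcd
      exact tmul_mem_right E 𝒜 _ (rowPair_mem E 𝒜 (i := c) hkl)
    · exact tmul_mem_left E 𝒜 _ (rowPair_mem E 𝒜 (i := i) hcd)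
  · -- column pairs
    rw [map_mul, Delta_u, Delta_u, Finset.sum_mul_sum]
    refine Submodule.sum_mem _ fun c _ => Submodule.sum_mem _ fun d _ => ?_
    rw [Algebra.TensorProduct.tmul_mul_tmul]
    by_cases hcd : c = d
    · subst hcd
      exact tmul_mem_left E 𝒜 _ (colPair_mem E 𝒜 (j := c) hkl)
    · exact tmul_mem_right E 𝒜 _ (colPair_mem E 𝒜 (j := j) hcd)
  · -- column sums
    rw [map_sub, map_sum, map_one]
    rw [Finset.sum_congr rfl fun k _ => Delta_u E k j]
    rw [Finset.sum_comm]
    rw [Finset.sum_congr rfl fun c _ => (TensorProduct.sum_tmul Finset.univ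
      (fun k => u E k c) (u E c j)).symm]
    have split : ∀ c : E, ((∑ k : E, u E k c) ⊗ₜ[ℂ] u E c j)
        = ((∑ k : E, u E k c) - 1) ⊗ₜ[ℂ] u E c j + 1 ⊗ₜ[ℂ] u E c j := by
      intro c
      rw [TensorProduct.sub_tmul]
      abel
    rw [Finset.sum_congr rfl fun c _ => split c, Finset.sum_add_distrib]
    have e2 : ∑ c : E, (1 : FreeAlgebra ℂ (E × E)) ⊗ₜ[ℂ] u E c j - 1 ⊗ₜ[ℂ] 1
        = 1 ⊗ₜ[ℂ] ((∑ c : E, u E c j) - 1) := by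
      rw [TensorProduct.tmul_sub, TensorProduct.tmul_sum]
    rw [Algebra.TensorProduct.one_def, add_sub_assoc, e2]
    refine Submodule.add_mem _ ?_ ?_
    · exact Submodule.sum_mem _ fun c _ => tmul_mem_left E 𝒜 _ (colSum_mem E 𝒜 c)
    · exact tmul_mem_right E 𝒜 _ (colSum_mem E 𝒜 j)
  · -- row sums
    rw [map_sub, map_sum, map_one]
    rw [Finset.sum_congr rfl fun k _ => Delta_u E i k]
    rw [Finset.sum_comm]
    rw [Finset.sum_congr rfl fun c _ => (TensorProduct.tmul_sum (u E i c) Finset.univ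
      (fun k => u E c k)).symm]
    have split : ∀ c : E, (u E i c ⊗ₜ[ℂ] (∑ k : E, u E c k))
        = u E i c ⊗ₜ[ℂ] ((∑ k : E, u E c k) - 1) + u E i c ⊗ₜ[ℂ] 1 := by
      intro c
      rw [TensorProduct.tmul_sub]
      abel
    rw [Finset.sum_congr rfl fun c _ => split c, Finset.sum_add_distrib]
    have e2 : ∑ c : E, u E i c ⊗ₜ[ℂ] (1 : FreeAlgebra ℂ (E × E)) - 1 ⊗ₜ[ℂ] 1
        = ((∑ c : E, u E i c) - 1) ⊗ₜ[ℂ] 1 := by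
      rw [TensorProduct.sub_tmul, TensorProduct.sum_tmul]
    rw [Algebra.TensorProduct.one_def, add_sub_assoc, e2]
    refine Submodule.add_mem _ ?_ ?_
    · exact Submodule.sum_mem _ fun c _ => tmul_mem_right E 𝒜 _ (rowSum_mem E 𝒜 c)
    · exact tmul_mem_left E 𝒜 _ (rowSum_mem E 𝒜 i)

lemma Delta_tupleGens_mem : ∀ g ∈ tupleGens E 𝒜, Delta E g ∈ MSub E 𝒜 := by
  rintro g ⟨k, A, B, hx, rfl⟩
  rw [Delta_uProd]
  refine Submodule.sum_mem _ fun C _ => ?_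
  rcases hx with ⟨hA, hB⟩ | ⟨hB, hA⟩
  · by_cases hC : (⟨k, C⟩ : Tup E) ∈ 𝒜
    · exact tmul_mem_right E 𝒜 _ (tupleGen_mem E 𝒜 (Or.inl ⟨hC, hB⟩))
    · exact tmul_mem_left E 𝒜 _ (tupleGen_mem E 𝒜 (Or.inl ⟨hA, hC⟩))
  · by_cases hC : (⟨k, C⟩ : Tup E) ∈ 𝒜
    · exact tmul_mem_left E 𝒜 _ (tupleGen_mem E 𝒜 (Or.inr ⟨hC, hA⟩))
    · exact tmul_mem_right E 𝒜 _ (tupleGen_mem E 𝒜 (Or.inr ⟨hB, hC⟩))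

theorem Delta_mem_MSub : ∀ x ∈ qIdeal E 𝒜, Delta E x ∈ MSub E 𝒜 := by
  intro x hx
  let K : TwoSidedIdeal (FreeAlgebra ℂ (E × E)) :=
    TwoSidedIdeal.mk' {y | Delta E y ∈ MSub E 𝒜}
      (by simp only [Set.mem_setOf_eq, map_zero]; exact Submodule.zero_mem _)
      (fun {a b} ha hb => by
        simp only [Set.mem_setOf_eq, map_add] at *
        exact Submodule.add_mem _ ha hb)
      (fun {a} ha => by
        simp only [Set.mem_setOf_eq, map_neg] at *
        exact Submodule.neg_mem _ ha)
      (fun {a b} hb => by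
        simp only [Set.mem_setOf_eq, map_mul] at *
        exact MSub_mul_left E 𝒜 _ hb)
      (fun {a b} ha => by
        simp only [Set.mem_setOf_eq, map_mul] at *
        exact MSub_mul_right E 𝒜 _ ha)
  have hsub : symRels E ∪ tupleGens E 𝒜 ⊆ (K : Set (FreeAlgebra ℂ (E × E))) := by
    rintro g (hg | hg) <;> rw [SetLike.mem_coe, TwoSidedIdeal.mem_mk', Set.mem_setOf_eq]
    · exact Delta_symRels_mem E 𝒜 g hg
    · exact Delta_tupleGens_mem E 𝒜 g hg
  have hxK : x ∈ K := TwoSidedIdeal.mem_span_iff.mp hx K hsub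
  rwa [TwoSidedIdeal.mem_mk', Set.mem_setOf_eq] at hxK

end QPG


/-- For every nonempty set `𝒜` of tuples over `E` of length at most
`|E|`, the ideal `I_𝒜` of `𝔖⁺(E)` is self-adjoint, and
`Δ(I_𝒜) ⊆ I_𝒜 ⊗ 𝔖⁺(E) + 𝔖⁺(E) ⊗ I_𝒜`; hence `Δ` descends to a coproduct on
`𝔊_𝒜 = 𝔖⁺(E)/I_𝒜`, making `𝔊_𝒜` a quantum permutation group on `E`. -/
theorem qIdeal_selfAdjoint_and_Delta_descends (E : Type) [Fintype E] [Nonempty E]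
    (𝒜 : Set (Tup E)) (h𝒜 : 𝒜.Nonempty) (hlen : ∀ T ∈ 𝒜, T.1 ≤ Fintype.card E) :
    (∀ x ∈ qIdeal E 𝒜, star x ∈ qIdeal E 𝒜) ∧
    (∀ x ∈ qIdeal E 𝒜, Delta E x ∈ Submodule.span ℂ
      {z : FreeAlgebra ℂ (E × E) ⊗[ℂ] FreeAlgebra ℂ (E × E) |
        ∃ a b : FreeAlgebra ℂ (E × E),
          (a ∈ qIdeal E 𝒜 ∨ b ∈ qIdeal E 𝒜) ∧ z = a ⊗ₜ[ℂ] b}) :=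
  ⟨QPG.star_mem_qIdeal E 𝒜, fun x hx => QPG.Delta_mem_MSub E 𝒜 x hx⟩

end
end

section
/- Let 𝒜₁, 𝒜₂ be nonempty sets of tuples over E of length at most |E|. Suppose that for each ℓ and each pair of tuples A = (a₁,…,a_ℓ) ∈ 𝒜₂ and B = (b₁,…,b_ℓ) ∉ 𝒜₂ there exist x ∈ E and a position i ∈ {1,…,ℓ} such that the tuple obtained from A by inserting x at position i lies in 𝒜₁, while for every y ∈ E the tuple obtained from B by inserting y at position i does not lie in 𝒜₁. Then I_{𝒜₂} ⊆ I_{𝒜₁}, i.e. 𝔊_{𝒜₁} ≤ 𝔊_{𝒜₂}. -/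
/-!
STATEMENT 3: If for each ℓ and each pair of same-length tuples A ∈ 𝒜₂, B ∉ 𝒜₂ there
are x ∈ E and a position i such that inserting x into A at position i gives a tuple in
𝒜₁ while inserting any y ∈ E into B at position i gives a tuple not in 𝒜₁, then
I_{𝒜₂} ⊆ I_{𝒜₁}, i.e. 𝔊_{𝒜₁} ≤ 𝔊_{𝒜₂}.

We model the ideal I_𝒜 of 𝔖⁺(E) by its preimage `qIdeal E 𝒜` in ℂ⟨E²⟩ (the two-sided
ideal generated by the relations of 𝔖⁺(E) together with the offending `u_{AB}`), so that
I_{𝒜₂} ⊆ I_{𝒜₁} becomes `qIdeal E 𝒜₂ ≤ qIdeal E 𝒜₁`.  Insertion of `x` at position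
`i ∈ {1, …, ℓ}` of an `ℓ`-tuple is `Fin.insertNth i.castSucc x`.
-/

noncomputable section

/-- `Fin.insertNth` at a successor index, as a `Fin.cons`. -/
lemma insertNth_succ_aux {β : Type*} {k : ℕ} (i : Fin (k + 1)) (c : β) (g : Fin (k + 1) → β) :
    Fin.insertNth (α := fun _ => β) i.succ c g
      = Fin.cons (g 0) (Fin.insertNth (α := fun _ => β) i c (Fin.tail g)) := by
  funext j
  refine Fin.cases ?_ (fun j => ?_) j
  · rw [Fin.cons_zero, ← Fin.succ_succAbove_zero i, Fin.insertNth_apply_succAbove]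
  · refine Fin.succAboveCases i ?_ (fun m => ?_) j
    · simp [Fin.insertNth_apply_same]
    · rw [Fin.cons_succ, Fin.insertNth_apply_succAbove,
        ← Fin.succ_succAbove_succ, Fin.insertNth_apply_succAbove]
      rfl

/-- `List.ofFn` of an `insertNth` tuple splits as take/cons/drop. -/
lemma ofFn_insertNth_aux {β : Type*} : ∀ {k : ℕ} (p : Fin (k + 1)) (c : β) (g : Fin k → β),
    List.ofFn (Fin.insertNth (α := fun _ => β) p c g)
      = (List.ofFn g).take p.val ++ c :: (List.ofFn g).drop p.val
  | 0, p, c, g => by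
    have hp : p = 0 := Subsingleton.elim (α := Fin 1) p 0
    subst hp
    simp [Fin.insertNth_zero', List.ofFn_cons]
  | k + 1, p, c, g => by
    refine Fin.cases ?_ (fun i => ?_) p
    · simp [Fin.insertNth_zero', List.ofFn_cons]
    · rw [insertNth_succ_aux, List.ofFn_cons, ofFn_insertNth_aux i c (Fin.tail g),
        List.ofFn_succ (f := g)]
      simp only [Fin.val_succ, List.take_succ_cons, List.drop_succ_cons, List.cons_append]
      rfl

lemma uProd_split_aux (E : Type) {k : ℕ} (p : Fin (k + 1)) (A B : Fin k → E) :
    uProd E A B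
      = ((List.ofFn fun t => u E (A t) (B t)).take p.val).prod *
        ((List.ofFn fun t => u E (A t) (B t)).drop p.val).prod := by
  rw [uProd, ← List.prod_append, List.take_append_drop]

lemma uProd_insert_aux (E : Type) {k : ℕ} (p : Fin (k + 1)) (x y : E) (A B : Fin k → E) :
    uProd E (Fin.insertNth (α := fun _ => E) p x A) (Fin.insertNth (α := fun _ => E) p y B)
      = ((List.ofFn fun t => u E (A t) (B t)).take p.val).prod * u E x y *
        ((List.ofFn fun t => u E (A t) (B t)).drop p.val).prod := by
  have hf : (fun t => u E (Fin.insertNth (α := fun _ => E) p x A t)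
        (Fin.insertNth (α := fun _ => E) p y B t))
      = Fin.insertNth (α := fun _ => FreeAlgebra ℂ (E × E)) p (u E x y)
        (fun t => u E (A t) (B t)) := by
    funext t
    refine Fin.succAboveCases p ?_ (fun m => ?_) t
    · simp [Fin.insertNth_apply_same]
    · simp [Fin.insertNth_apply_succAbove]
  rw [uProd, hf, ofFn_insertNth_aux, List.prod_append, List.prod_cons, mul_assoc]

/-- Under the insertion hypothesis, `I_{𝒜₂} ⊆ I_{𝒜₁}`,
i.e. `𝔊_{𝒜₁} ≤ 𝔊_{𝒜₂}`. -/
theorem qIdeal_le_of_insert (E : Type) [Fintype E] [Nonempty E]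
    (𝒜₁ 𝒜₂ : Set (Tup E)) (h₁ : 𝒜₁.Nonempty) (h₂ : 𝒜₂.Nonempty)
    (hlen₁ : ∀ T ∈ 𝒜₁, T.1 ≤ Fintype.card E)
    (hlen₂ : ∀ T ∈ 𝒜₂, T.1 ≤ Fintype.card E)
    (hins : ∀ (ℓ : ℕ) (A B : Fin ℓ → E),
      (⟨ℓ, A⟩ : Tup E) ∈ 𝒜₂ → (⟨ℓ, B⟩ : Tup E) ∉ 𝒜₂ →
      ∃ (x : E) (i : Fin ℓ),
        (⟨ℓ + 1, Fin.insertNth i.castSucc x A⟩ : Tup E) ∈ 𝒜₁ ∧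
        ∀ y : E, (⟨ℓ + 1, Fin.insertNth i.castSucc y B⟩ : Tup E) ∉ 𝒜₁) :
    qIdeal E 𝒜₂ ≤ qIdeal E 𝒜₁ := by
  classical
  have hsub : symRels E ∪ tupleGens E 𝒜₂ ⊆ (qIdeal E 𝒜₁ : Set (FreeAlgebra ℂ (E × E))) := by
    rintro z (hz | hz)
    · exact TwoSidedIdeal.subset_span (Set.mem_union_left _ hz)
    · obtain ⟨k, A, B, hxor, rfl⟩ := hz
      have huJ : ∀ {m : ℕ} (A' B' : Fin m → E),
          Xor' ((⟨m, A'⟩ : Tup E) ∈ 𝒜₁) ((⟨m, B'⟩ : Tup E) ∈ 𝒜₁) →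
          uProd E A' B' ∈ qIdeal E 𝒜₁ := fun A' B' h =>
        TwoSidedIdeal.subset_span (Set.mem_union_right _ ⟨_, A', B', h, rfl⟩)
      have hrow : ∀ x0 : E, (∑ y : E, u E x0 y) - 1 ∈ qIdeal E 𝒜₁ := fun x0 =>
        TwoSidedIdeal.subset_span (Set.mem_union_left _ (Or.inr ⟨x0, rfl⟩))
      have hcol : ∀ x0 : E, (∑ y : E, u E y x0) - 1 ∈ qIdeal E 𝒜₁ := fun x0 =>
        TwoSidedIdeal.subset_span (Set.mem_union_left _ (Or.inl (Or.inr ⟨x0, rfl⟩)))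
      rcases hxor with ⟨hA2, hB2⟩ | ⟨hB2, hA2⟩
      · obtain ⟨x0, i, hA1, hB1⟩ := hins k A B hA2 hB2
        set p : Fin (k + 1) := i.castSucc with hp
        set T := ((List.ofFn fun t => u E (A t) (B t)).take p.val).prod with hT
        set D := ((List.ofFn fun t => u E (A t) (B t)).drop p.val).prod with hD
        have key : uProd E A B
            = (∑ y : E, uProd E (Fin.insertNth (α := fun _ => E) p x0 A)
                (Fin.insertNth (α := fun _ => E) p y B))
              - T * ((∑ y : E, u E x0 y) - 1) * D := by
          have hsum : (∑ y : E, uProd E (Fin.insertNth (α := fun _ => E) p x0 A)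
              (Fin.insertNth (α := fun _ => E) p y B))
              = T * (∑ y : E, u E x0 y) * D := by
            simp_rw [uProd_insert_aux E p x0 _ A B]
            rw [← Finset.sum_mul, ← Finset.mul_sum]
          rw [hsum, uProd_split_aux E p A B]
          noncomm_ring
        rw [key]
        refine TwoSidedIdeal.sub_mem _ ?_ ?_
        · exact TwoSidedIdeal.finsetSum_mem _ _ _ fun y _ =>
            huJ _ _ (Or.inl ⟨hA1, hB1 y⟩)
        · exact TwoSidedIdeal.mul_mem_right _ _ _
            (TwoSidedIdeal.mul_mem_left _ _ _ (hrow x0))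
      · obtain ⟨x0, i, hB1, hA1⟩ := hins k B A hB2 hA2
        set p : Fin (k + 1) := i.castSucc with hp
        set T := ((List.ofFn fun t => u E (A t) (B t)).take p.val).prod with hT
        set D := ((List.ofFn fun t => u E (A t) (B t)).drop p.val).prod with hD
        have key : uProd E A B
            = (∑ y : E, uProd E (Fin.insertNth (α := fun _ => E) p y A)
                (Fin.insertNth (α := fun _ => E) p x0 B))
              - T * ((∑ y : E, u E y x0) - 1) * D := by
          have hsum : (∑ y : E, uProd E (Fin.insertNth (α := fun _ => E) p y A)
              (Fin.insertNth (α := fun _ => E) p x0 B))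
              = T * (∑ y : E, u E y x0) * D := by
            simp_rw [uProd_insert_aux E p _ x0 A B]
            rw [← Finset.sum_mul, ← Finset.mul_sum]
          rw [hsum, uProd_split_aux E p A B]
          noncomm_ring
        rw [key]
        refine TwoSidedIdeal.sub_mem _ ?_ ?_
        · exact TwoSidedIdeal.finsetSum_mem _ _ _ fun y _ =>
            huJ _ _ (Or.inr ⟨hB1, hA1 y⟩)
        · exact TwoSidedIdeal.mul_mem_right _ _ _
            (TwoSidedIdeal.mul_mem_left _ _ _ (hcol x0))
  intro z hz
  rw [qIdeal, TwoSidedIdeal.mem_span_iff] at hz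
  exact hz _ hsub


end
end

section
/- For every matroid M on a nonempty finite ground set E, the independent-sets quantum automorphism group and the bases quantum automorphism group coincide: I(QAut_ℐ(M)) = I(QAut_ℬ(M)) as two-sided ideals of 𝔖⁺(E), hence QAut_ℐ(M) = QAut_ℬ(M). -/
/-!
STATEMENT 4: For every matroid M on a nonempty finite ground set E,
I(QAut_ℐ(M)) = I(QAut_ℬ(M)), hence QAut_ℐ(M) = QAut_ℬ(M).

We model a matroid on the nonempty finite ground set E as a Mathlib `Matroid E` whose
ground set is all of `E`, and the defining ideal of a quantum automorphism group of M
(an ideal of 𝔖⁺(E)) by its preimage `qIdeal E 𝒜` in ℂ⟨E²⟩: the two-sided ideal generated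
by the relations of 𝔖⁺(E) together with the elements u_{AB} with exactly one of A, B
in 𝒜.  An independent tuple is a repetition-free tuple whose underlying set is
independent, and a basis tuple is a repetition-free tuple whose underlying set is a
basis (equivalently, an independent tuple of length rank(M)).
-/

noncomputable section

/-- Independent tuples of a matroid: repetition-free tuples whose underlying set
is independent. -/
def indepTuples {E : Type} (M : Matroid E) : Set (Tup E) :=
  {T | Function.Injective T.2 ∧ M.Indep (Set.range T.2)}

/-- Basis tuples of a matroid: repetition-free tuples whose underlying set is a
basis. -/
def baseTuples {E : Type} (M : Matroid E) : Set (Tup E) :=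
  {T | Function.Injective T.2 ∧ M.IsBase (Set.range T.2)}

namespace QAux

variable {E : Type} [Fintype E]

/-- Product of generators along two lists. -/
def uL (E : Type) (A B : List E) : FreeAlgebra ℂ (E × E) :=
  (List.zipWith (u E) A B).prod

lemma ofFn_pair {k : ℕ} (A B : Fin k → E) :
    List.ofFn (fun t => u E (A t) (B t)) = List.zipWith (u E) (List.ofFn A) (List.ofFn B) := by
  apply List.ext_getElem
  · simp
  · intro i h1 h2
    simp

lemma uProd_eq {k : ℕ} (A B : Fin k → E) :
    uProd E A B = uL E (List.ofFn A) (List.ofFn B) := by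
  rw [uProd, uL, ofFn_pair]

lemma uL_append_single (A B : List E) (h : A.length = B.length) (a b : E) :
    uL E (A ++ [a]) (B ++ [b]) = uL E A B * u E a b := by
  rw [uL, List.zipWith_append h, List.prod_append, uL]
  simp

lemma ofFn_cast (A B : List E) (h : A.length = B.length) :
    List.ofFn (fun i : Fin A.length => B.get (Fin.cast h i)) = B := by
  apply List.ext_getElem
  · simp [h]
  · intro i h1 h2
    simp

lemma mem_indepTuples_iff (M : Matroid E) {k : ℕ} (A : Fin k → E) :
    (⟨k, A⟩ : Tup E) ∈ indepTuples M ↔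
      (List.ofFn A).Nodup ∧ M.Indep {x | x ∈ List.ofFn A} := by
  have h2 : Set.range A = {x | x ∈ List.ofFn A} := by
    ext x; simp [List.mem_ofFn]
  constructor
  · rintro ⟨h1, hI⟩
    exact ⟨List.nodup_ofFn.mpr h1, h2 ▸ hI⟩
  · rintro ⟨h1, hI⟩
    exact ⟨List.nodup_ofFn.mp h1, h2 ▸ hI⟩

lemma mem_baseTuples_iff (M : Matroid E) {k : ℕ} (A : Fin k → E) :
    (⟨k, A⟩ : Tup E) ∈ baseTuples M ↔
      (List.ofFn A).Nodup ∧ M.IsBase {x | x ∈ List.ofFn A} := by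
  have h2 : Set.range A = {x | x ∈ List.ofFn A} := by
    ext x; simp [List.mem_ofFn]
  constructor
  · rintro ⟨h1, hI⟩
    exact ⟨List.nodup_ofFn.mpr h1, h2 ▸ hI⟩
  · rintro ⟨h1, hI⟩
    exact ⟨List.nodup_ofFn.mp h1, h2 ▸ hI⟩

lemma symRels_subset (𝒜 : Set (Tup E)) : symRels E ⊆ (qIdeal E 𝒜 : Set _) :=
  fun _ hx => TwoSidedIdeal.subset_span (Set.mem_union_left _ hx)

lemma row_rel (𝒜 : Set (Tup E)) (a : FreeAlgebra ℂ (E × E)) (d : E) :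
    (∑ c : E, a * u E d c) - a ∈ qIdeal E 𝒜 := by
  have hg : (∑ k : E, u E d k) - 1 ∈ qIdeal E 𝒜 :=
    symRels_subset 𝒜 (Or.inr ⟨d, rfl⟩)
  have := (qIdeal E 𝒜).mul_mem_left a _ hg
  have heq : a * ((∑ k : E, u E d k) - 1) = (∑ c : E, a * u E d c) - a := by
    rw [mul_sub, mul_one, Finset.mul_sum]
  rwa [heq] at this

lemma col_rel (𝒜 : Set (Tup E)) (a : FreeAlgebra ℂ (E × E)) (d : E) :
    (∑ c : E, a * u E c d) - a ∈ qIdeal E 𝒜 := by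
  have hg : (∑ k : E, u E k d) - 1 ∈ qIdeal E 𝒜 :=
    symRels_subset 𝒜 (Or.inl (Or.inr ⟨d, rfl⟩))
  have := (qIdeal E 𝒜).mul_mem_left a _ hg
  have heq : a * ((∑ k : E, u E k d) - 1) = (∑ c : E, a * u E c d) - a := by
    rw [mul_sub, mul_one, Finset.mul_sum]
  rwa [heq] at this

lemma right_ext (M : Matroid E) (D : List E) :
    ∀ A B : List E, A.length = B.length →
      (A ++ D).Nodup → M.IsBase {x | x ∈ A ++ D} →
      ¬ (B.Nodup ∧ M.Indep {x | x ∈ B}) →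
      uL E A B ∈ qIdeal E (baseTuples M) := by
  induction D with
  | nil =>
    intro A B hlen hnd hbase hB
    rw [List.append_nil] at hnd hbase
    apply TwoSidedIdeal.subset_span
    refine Set.mem_union_right _
      ⟨A.length, A.get, (fun i => B.get (Fin.cast hlen i)), ?_, ?_⟩
    · left
      constructor
      · rw [mem_baseTuples_iff, List.ofFn_get]
        exact ⟨hnd, by simpa using hbase⟩
      · rw [mem_baseTuples_iff, ofFn_cast _ _ hlen]
        intro hc
        exact hB ⟨hc.1, hc.2.indep⟩
    · rw [uProd_eq, List.ofFn_get, ofFn_cast _ _ hlen]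
  | cons d D' ih =>
    intro A B hlen hnd hbase hB
    have hterm : ∀ c : E, uL E A B * u E d c ∈ qIdeal E (baseTuples M) := by
      intro c
      rw [← uL_append_single A B hlen d c]
      apply ih (A ++ [d]) (B ++ [c]) (by simp [hlen])
      · simpa [List.append_assoc] using hnd
      · have : A ++ [d] ++ D' = A ++ d :: D' := by simp
        rw [this]; exact hbase
      · intro hc
        refine hB ⟨(List.nodup_append.mp hc.1).1, hc.2.subset ?_⟩
        intro x hx
        exact List.mem_append_left _ hx
    have hsum : (∑ c : E, uL E A B * u E d c) ∈ qIdeal E (baseTuples M) :=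
      sum_mem fun c _ => hterm c
    have hr := row_rel (baseTuples M) (uL E A B) d
    have heq : uL E A B =
        (∑ c : E, uL E A B * u E d c) - ((∑ c : E, uL E A B * u E d c) - uL E A B) := by
      exact (sub_sub_cancel _ _).symm
    rw [heq]
    exact sub_mem hsum hr

lemma left_ext (M : Matroid E) (D : List E) :
    ∀ A B : List E, A.length = B.length →
      ¬ (A.Nodup ∧ M.Indep {x | x ∈ A}) →
      (B ++ D).Nodup → M.IsBase {x | x ∈ B ++ D} →
      uL E A B ∈ qIdeal E (baseTuples M) := by
  induction D with
  | nil =>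
    intro A B hlen hA hnd hbase
    rw [List.append_nil] at hnd hbase
    apply TwoSidedIdeal.subset_span
    refine Set.mem_union_right _
      ⟨A.length, A.get, (fun i => B.get (Fin.cast hlen i)), ?_, ?_⟩
    · right
      constructor
      · rw [mem_baseTuples_iff, ofFn_cast _ _ hlen]
        exact ⟨hnd, by simpa using hbase⟩
      · rw [mem_baseTuples_iff, List.ofFn_get]
        intro hc
        exact hA ⟨hc.1, hc.2.indep⟩
    · rw [uProd_eq, List.ofFn_get, ofFn_cast _ _ hlen]
  | cons d D' ih =>
    intro A B hlen hA hnd hbase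
    have hterm : ∀ c : E, uL E A B * u E c d ∈ qIdeal E (baseTuples M) := by
      intro c
      rw [← uL_append_single A B hlen c d]
      apply ih (A ++ [c]) (B ++ [d]) (by simp [hlen])
      · intro hc
        refine hA ⟨(List.nodup_append.mp hc.1).1, hc.2.subset ?_⟩
        intro x hx
        exact List.mem_append_left _ hx
      · simpa [List.append_assoc] using hnd
      · have : B ++ [d] ++ D' = B ++ d :: D' := by simp
        rw [this]; exact hbase
    have hsum : (∑ c : E, uL E A B * u E c d) ∈ qIdeal E (baseTuples M) :=
      sum_mem fun c _ => hterm c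
    have hr := col_rel (baseTuples M) (uL E A B) d
    have heq : uL E A B =
        (∑ c : E, uL E A B * u E c d) - ((∑ c : E, uL E A B * u E c d) - uL E A B) := by
      exact (sub_sub_cancel _ _).symm
    rw [heq]
    exact sub_mem hsum hr

lemma exists_base_ext (M : Matroid E) (l : List E) (hnd : l.Nodup)
    (hi : M.Indep {x | x ∈ l}) :
    ∃ D : List E, (l ++ D).Nodup ∧ M.IsBase {x | x ∈ l ++ D} := by
  obtain ⟨Bs, hBs, hsub⟩ := hi.exists_isBase_superset
  have hfin : (Bs \ {x | x ∈ l}).Finite := Set.toFinite _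
  refine ⟨hfin.toFinset.toList, ?_, ?_⟩
  · rw [List.nodup_append]
    refine ⟨hnd, Finset.nodup_toList _, ?_⟩
    rintro x hx y hx2 rfl
    have hmem : x ∈ Bs \ {x | x ∈ l} := by
      rwa [Finset.mem_toList, Set.Finite.mem_toFinset] at hx2
    exact hmem.2 hx
  · have hset : {x | x ∈ l ++ hfin.toFinset.toList} = Bs := by
      ext x
      simp only [Set.mem_setOf_eq, List.mem_append, Finset.mem_toList,
        Set.Finite.mem_toFinset, Set.mem_diff]
      constructor
      · rintro (h | h)
        · exact hsub h
        · exact h.1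
      · intro h
        by_cases hx : x ∈ l
        · exact Or.inl hx
        · exact Or.inr ⟨h, hx⟩
    rwa [hset]

lemma encard_range_inj {k : ℕ} {f : Fin k → E} (hf : Function.Injective f) :
    (Set.range f).encard = k := by
  rw [← Set.image_univ, Set.InjOn.encard_image hf.injOn, Set.encard_univ]
  simp

lemma base_of_indep_encard (M : Matroid E) {S T : Set E} (hS : M.IsBase S) (hT : M.Indep T)
    (h : T.encard = S.encard) : M.IsBase T := by
  obtain ⟨B2, hB2, hTB2⟩ := hT.exists_isBase_superset
  have hcard : B2.encard ≤ T.encard := by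
    rw [h, hS.encard_eq_encard_of_isBase hB2]
  have heq := (Set.toFinite B2).eq_of_subset_of_encard_le' hTB2 hcard
  rwa [heq]

end QAux

/-- For every matroid `M` on a nonempty finite ground set `E`,
`I(QAut_ℐ(M)) = I(QAut_ℬ(M))`, hence `QAut_ℐ(M) = QAut_ℬ(M)`. -/
theorem qIdeal_indep_eq_qIdeal_base (E : Type) [Fintype E] [Nonempty E]
    (M : Matroid E) (hM : M.E = Set.univ) :
    qIdeal E (indepTuples M) = qIdeal E (baseTuples M) := by
  apply le_antisymm
  · -- I(QAut_I) ≤ I(QAut_B)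
    intro x hx
    rw [qIdeal, TwoSidedIdeal.mem_span_iff] at hx
    apply hx
    apply Set.union_subset
    · exact QAux.symRels_subset _
    · rintro y ⟨k, A, B, hxor, rfl⟩
      rcases hxor with ⟨hA, hB⟩ | ⟨hB, hA⟩
      · rw [QAux.mem_indepTuples_iff] at hA hB
        obtain ⟨D, hnd, hbase⟩ := QAux.exists_base_ext M _ hA.1 hA.2
        rw [QAux.uProd_eq]
        exact QAux.right_ext M D _ _ (by simp) hnd hbase hB
      · rw [QAux.mem_indepTuples_iff] at hA hB
        obtain ⟨D, hnd, hbase⟩ := QAux.exists_base_ext M _ hB.1 hB.2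
        rw [QAux.uProd_eq]
        exact QAux.left_ext M D _ _ (by simp) hA hnd hbase
  · -- I(QAut_B) ≤ I(QAut_I)
    intro x hx
    rw [qIdeal, TwoSidedIdeal.mem_span_iff] at hx
    apply hx
    apply Set.union_subset
    · exact QAux.symRels_subset _
    · rintro y ⟨k, A, B, hxor, rfl⟩
      apply TwoSidedIdeal.subset_span
      refine Set.mem_union_right _ ⟨k, A, B, ?_, rfl⟩
      rcases hxor with ⟨hA, hB⟩ | ⟨hB, hA⟩
      · left
        refine ⟨⟨hA.1, hA.2.indep⟩, ?_⟩
        intro hBi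
        exact hB ⟨hBi.1, QAux.base_of_indep_encard M hA.2 hBi.2
          (by rw [QAux.encard_range_inj hBi.1, QAux.encard_range_inj hA.1])⟩
      · right
        refine ⟨⟨hB.1, hB.2.indep⟩, ?_⟩
        intro hAi
        exact hA ⟨hAi.1, QAux.base_of_indep_encard M hB.2 hAi.2
          (by rw [QAux.encard_range_inj hAi.1, QAux.encard_range_inj hB.1])⟩

end
end

section
/- Let M be a simple rank-3 matroid on ground set E. A triangle of M is a triple {F₁, F₂, F₃} of rank-2 flats that pairwise intersect nontrivially but with F₁ ∩ F₂ ∩ F₃ = ∅. If E ≠ F₁ ∪ F₂ ∪ F₃ for every triangle {F₁, F₂, F₃} of M, then I(QAut_ℬ(M)) ⊆ I(QAut_𝒞(M)), i.e. QAut_𝒞(M) ≤ QAut_ℬ(M). -/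
/-!
STATEMENT 5: Let M be a simple rank-3 matroid on ground set E.  If E ≠ F₁ ∪ F₂ ∪ F₃
for every triangle {F₁, F₂, F₃} (a triple of rank-2 flats that pairwise intersect
nontrivially but with empty triple intersection), then
I(QAut_ℬ(M)) ⊆ I(QAut_𝒞(M)), i.e. QAut_𝒞(M) ≤ QAut_ℬ(M).

We model a matroid on the nonempty finite ground set E as a Mathlib `Matroid E` with
ground set all of `E`, and the defining ideals of the quantum automorphism groups
(ideals of 𝔖⁺(E)) by their preimages `qIdeal E 𝒜` in ℂ⟨E²⟩.  Circuits are the minimal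
dependent sets; a circuit tuple is either (a, a) for a non-loop a, or a repetition-free
tuple whose underlying set is a circuit.  A rank-2 flat is a flat having a basis of
size 2; "rank 3" means M has a basis of size 3.
-/

noncomputable section

/-- A circuit of a matroid: a minimal dependent set, i.e. a dependent set all of whose
proper subsets are independent. -/
def IsCircuitSet {E : Type} (M : Matroid E) (C : Set E) : Prop :=
  ¬ M.Indep C ∧ ∀ a ∈ C, M.Indep (C \ {a})

/-- Circuit tuples of a matroid: either `(a, a)` for a non-loop `a`, or a
repetition-free tuple whose underlying set is a circuit. -/
def circuitTuples {E : Type} (M : Matroid E) : Set (Tup E) :=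
  {T | (∃ a : E, M.Indep {a} ∧ T = ⟨2, fun _ => a⟩) ∨
       (Function.Injective T.2 ∧ IsCircuitSet M (Set.range T.2))}

/-- A rank-2 flat: a flat possessing a basis of cardinality 2. -/
def Rank2Flat {E : Type} (M : Matroid E) (F : Set E) : Prop :=
  M.IsFlat F ∧ ∃ I : Set E, M.IsBasis I F ∧ I.ncard = 2


/-! ### Auxiliary lemmas -/

section Aux

set_option linter.unusedSectionVars false

variable {E : Type} [Fintype E]

lemma flat_closure_aux (M : Matroid E) (X : Set E) : M.IsFlat (M.closure X) := by
  rw [Matroid.closure_def]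
  have hne : Nonempty ↑{F : Set E | M.IsFlat F ∧ X ∩ M.E ⊆ F} :=
    ⟨⟨M.E, M.ground_isFlat, Set.inter_subset_right⟩⟩
  rw [Set.sInter_eq_iInter]
  exact Matroid.IsFlat.iInter fun F => F.2.1

lemma range_fin3 (A : Fin 3 → E) : Set.range A = {A 0, A 1, A 2} := by
  ext x
  constructor
  · rintro ⟨i, rfl⟩
    fin_cases i
    · exact Set.mem_insert _ _
    · exact Set.mem_insert_of_mem _ (Set.mem_insert _ _)
    · exact Set.mem_insert_of_mem _ (Set.mem_insert_of_mem _ rfl)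
  · rintro (rfl | rfl | rfl)
    · exact ⟨0, rfl⟩
    · exact ⟨1, rfl⟩
    · exact ⟨2, rfl⟩

lemma range_snoc_aux {n : ℕ} (f : Fin n → E) (x : E) :
    Set.range (Fin.snoc f x : Fin (n+1) → E) = insert x (Set.range f) := by
  ext y
  constructor
  · rintro ⟨i, rfl⟩
    induction i using Fin.lastCases with
    | last => simp [Fin.snoc_last]
    | cast i => exact Set.mem_insert_of_mem _ ⟨i, by rw [Fin.snoc_castSucc]⟩
  · rintro (rfl | ⟨i, rfl⟩)
    · exact ⟨Fin.last n, Fin.snoc_last _ _⟩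
    · exact ⟨i.castSucc, Fin.snoc_castSucc _ _ _⟩

lemma snoc_not_inj {n : ℕ} {f : Fin n → E} (h : ¬ Function.Injective f) (x : E) :
    ¬ Function.Injective (Fin.snoc f x : Fin (n+1) → E) := by
  obtain ⟨i, j, hij, hne⟩ := Function.not_injective_iff.mp h
  intro hc
  refine hne (Fin.castSucc_injective _ (hc ?_))
  rw [Fin.snoc_castSucc, Fin.snoc_castSucc]
  exact hij

lemma snoc_inj {n : ℕ} {f : Fin n → E} (hf : Function.Injective f) {x : E}
    (hx : x ∉ Set.range f) :
    Function.Injective (Fin.snoc f x : Fin (n+1) → E) := by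
  intro i j hij
  induction i using Fin.lastCases with
  | last =>
    induction j using Fin.lastCases with
    | last => rfl
    | cast j =>
      rw [Fin.snoc_last, Fin.snoc_castSucc] at hij
      exact absurd ⟨j, hij.symm⟩ hx
  | cast i =>
    induction j using Fin.lastCases with
    | last =>
      rw [Fin.snoc_last, Fin.snoc_castSucc] at hij
      exact absurd ⟨i, hij⟩ hx
    | cast j =>
      rw [Fin.snoc_castSucc, Fin.snoc_castSucc] at hij
      rw [hf hij]

lemma uProd_snoc {k : ℕ} (A B : Fin k → E) (x y : E) :
    uProd E (Fin.snoc A x) (Fin.snoc B y) = uProd E A B * u E x y := by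
  unfold uProd
  rw [List.ofFn_succ', List.prod_concat]
  simp only [Fin.snoc_castSucc, Fin.snoc_last]

lemma mem_qIdeal_of_mem_symRels {𝒜 : Set (Tup E)} {x : FreeAlgebra ℂ (E × E)}
    (hx : x ∈ symRels E) : x ∈ qIdeal E 𝒜 :=
  TwoSidedIdeal.subset_span (Or.inl hx)

lemma mem_qIdeal_of_gen {𝒜 : Set (Tup E)} {x : FreeAlgebra ℂ (E × E)}
    (hx : x ∈ tupleGens E 𝒜) : x ∈ qIdeal E 𝒜 :=
  TwoSidedIdeal.subset_span (Or.inr hx)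

lemma row_sum_mem_symRels (i : E) : (∑ k : E, u E i k) - 1 ∈ symRels E :=
  Or.inr ⟨i, rfl⟩

lemma col_sum_mem_symRels (j : E) : (∑ k : E, u E k j) - 1 ∈ symRels E :=
  Or.inl (Or.inr ⟨j, rfl⟩)

/-- Expansion trick with a row sum. -/
lemma mem_of_forall_snoc_row {𝒜 : Set (Tup E)} {k : ℕ} (A B : Fin k → E) (a : E)
    (h : ∀ d : E, uProd E (Fin.snoc A a) (Fin.snoc B d) ∈ qIdeal E 𝒜) :
    uProd E A B ∈ qIdeal E 𝒜 := by
  have key : uProd E A B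
      = (∑ d : E, uProd E (Fin.snoc A a) (Fin.snoc B d))
        - uProd E A B * ((∑ d : E, u E a d) - 1) := by
    have : ∀ d : E, uProd E (Fin.snoc A a) (Fin.snoc B d) = uProd E A B * u E a d :=
      fun d => uProd_snoc A B a d
    simp_rw [this]
    rw [← Finset.mul_sum, mul_sub, mul_one, sub_sub_cancel]
  rw [key]
  exact TwoSidedIdeal.sub_mem _
    (TwoSidedIdeal.finsetSum_mem _ _ _ fun d _ => h d)
    (TwoSidedIdeal.mul_mem_left _ _ _ (mem_qIdeal_of_mem_symRels (row_sum_mem_symRels a)))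

/-- Expansion trick with a column sum. -/
lemma mem_of_forall_snoc_col {𝒜 : Set (Tup E)} {k : ℕ} (A B : Fin k → E) (b : E)
    (h : ∀ x : E, uProd E (Fin.snoc A x) (Fin.snoc B b) ∈ qIdeal E 𝒜) :
    uProd E A B ∈ qIdeal E 𝒜 := by
  have key : uProd E A B
      = (∑ x : E, uProd E (Fin.snoc A x) (Fin.snoc B b))
        - uProd E A B * ((∑ x : E, u E x b) - 1) := by
    have : ∀ x : E, uProd E (Fin.snoc A x) (Fin.snoc B b) = uProd E A B * u E x b :=
      fun x => uProd_snoc A B x b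
    simp_rw [this]
    rw [← Finset.mul_sum, mul_sub, mul_one, sub_sub_cancel]
  rw [key]
  exact TwoSidedIdeal.sub_mem _
    (TwoSidedIdeal.finsetSum_mem _ _ _ fun x _ => h x)
    (TwoSidedIdeal.mul_mem_left _ _ _ (mem_qIdeal_of_mem_symRels (col_sum_mem_symRels b)))

lemma not_circuitTuple_of_indep {M : Matroid E} {k : ℕ} {A : Fin k → E}
    (hk : k ≠ 2) (hA : M.Indep (Set.range A)) :
    (⟨k, A⟩ : Tup E) ∉ circuitTuples M := by
  rintro (⟨a, _, hEq⟩ | ⟨_, hdep, _⟩)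
  · exact hk (congrArg Sigma.fst hEq)
  · exact hdep hA

lemma not_circuitTuple_of_not_inj {M : Matroid E} {k : ℕ} {A : Fin k → E}
    (hk : k ≠ 2) (hA : ¬ Function.Injective A) :
    (⟨k, A⟩ : Tup E) ∉ circuitTuples M := by
  rintro (⟨a, _, hEq⟩ | ⟨hinj, _⟩)
  · exact hk (congrArg Sigma.fst hEq)
  · exact hA hinj

lemma indep_insert_of_not_mem_closure {M : Matroid E} (hM : M.E = Set.univ)
    {x : E} {S : Set E} (hS : M.Indep S) (hx : x ∉ M.closure S) :
    M.Indep (insert x S) := by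
  have hxS : x ∉ S := fun h => hx (M.subset_closure S (by rw [hM]; exact Set.subset_univ _) h)
  rw [hS.insert_indep_iff_of_notMem hxS]
  exact ⟨by rw [hM]; exact Set.mem_univ x, hx⟩

lemma base_of_indep_ncard3 {M : Matroid E} (hrank3 : ∃ B : Set E, M.IsBase B ∧ B.ncard = 3)
    {I : Set E} (hI : M.Indep I) (hcard : I.ncard = 3) : M.IsBase I := by
  obtain ⟨B0, hB0, hB0card⟩ := hrank3
  obtain ⟨B, hB, hIB⟩ := hI.exists_isBase_superset
  have hBcard : B.ncard = 3 := (hB.ncard_eq_ncard_of_isBase hB0).trans hB0card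
  have hIB' : I = B :=
    Set.eq_of_subset_of_ncard_le hIB (by rw [hBcard, hcard]) (Set.toFinite B)
  rwa [hIB']

lemma ncard_range_inj {k : ℕ} {A : Fin k → E} (hA : Function.Injective A) :
    (Set.range A).ncard = k := by
  rw [← Nat.card_coe_set_eq, Nat.card_range_of_injective hA, Nat.card_eq_fintype_card,
    Fintype.card_fin]

lemma not_mem_closure_pair {M : Matroid E} {a0 a1 a2 : E}
    (h : M.Indep {a0, a1, a2}) (hne : a2 ∉ ({a0, a1} : Set E)) :
    a2 ∉ M.closure {a0, a1} := by
  have h01 : M.Indep {a0, a1} := h.subset (by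
    intro x hx
    rcases hx with rfl | rfl
    · exact Set.mem_insert _ _
    · exact Set.mem_insert_of_mem _ (Set.mem_insert _ _))
  have hins : M.Indep (insert a2 {a0, a1}) := by
    have hset : (insert a2 {a0, a1} : Set E) = {a0, a1, a2} := by
      ext y
      simp only [Set.mem_insert_iff, Set.mem_singleton_iff]
      tauto
    rwa [hset]
  intro hc
  exact ((h01.insert_indep_iff_of_notMem hne).mp hins).2 hc

/-- Two lines through pairs of a basis triple cannot meet outside the triple. -/
lemma no_common_point {M : Matroid E} (hM : M.E = Set.univ)
    (hsimple : (∀ x : E, M.Indep {x}) ∧ ∀ x y : E, x ≠ y → M.Indep {x, y})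
    {a0 a1 a2 x : E}
    (h2 : a2 ∉ M.closure {a0, a1}) (hx0 : x ≠ a0)
    (hx01 : x ∈ M.closure {a0, a1}) (hx02 : x ∈ M.closure {a0, a2}) : False := by
  have hx_not0 : x ∉ M.closure {a0} := by
    have hpair : M.Indep (insert x {a0}) := hsimple.2 x a0 hx0
    have hxmem : x ∉ ({a0} : Set E) := by simpa using hx0
    exact (Set.mem_diff x).mp
      (((hsimple.1 a0).insert_indep_iff_of_notMem hxmem).mp hpair) |>.2
  have hx02' : x ∈ M.closure (insert a2 {a0}) := by
    rwa [show (insert a2 {a0} : Set E) = {a0, a2} from Set.pair_comm a2 a0]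
  have hexch := Matroid.closure_exchange (Set.mem_diff x |>.mpr ⟨hx02', hx_not0⟩)
  have h1 : M.closure (insert x {a0}) ⊆ M.closure (insert x {a0, a1}) :=
    M.closure_subset_closure (Set.insert_subset_insert
      (Set.singleton_subset_iff.mpr (Set.mem_insert _ _)))
  have h2' : M.closure (insert x ({a0, a1} : Set E)) = M.closure {a0, a1} :=
    Matroid.closure_insert_eq_of_mem_closure hx01
  exact h2 (h2' ▸ h1 hexch.1)

end Aux


/-- A basis triple together with a point off the three lines it spans forms a 4-circuit. -/
lemma exists_fourth {E : Type} [Fintype E] {M : Matroid E} (hM : M.E = Set.univ)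
    (hsimple : (∀ x : E, M.Indep {x}) ∧ ∀ x y : E, x ≠ y → M.Indep {x, y})
    (htriangle : ∀ F₁ F₂ F₃ : Set E,
      Rank2Flat M F₁ → Rank2Flat M F₂ → Rank2Flat M F₃ →
      (F₁ ∩ F₂).Nonempty → (F₁ ∩ F₃).Nonempty → (F₂ ∩ F₃).Nonempty →
      F₁ ∩ F₂ ∩ F₃ = ∅ →
      F₁ ∪ F₂ ∪ F₃ ≠ Set.univ)
    {A : Fin 3 → E} (hinj : Function.Injective A) (hbase : M.IsBase (Set.range A)) :
    ∃ a₄ : E, Function.Injective (Fin.snoc A a₄ : Fin 4 → E) ∧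
      IsCircuitSet M (Set.range (Fin.snoc A a₄ : Fin 4 → E)) := by
  set a0 := A 0 with ha0def
  set a1 := A 1 with ha1def
  set a2 := A 2 with ha2def
  have hrange : Set.range A = {a0, a1, a2} := range_fin3 A
  have h01 : a0 ≠ a1 := fun h => absurd (hinj h) (by decide)
  have h02 : a0 ≠ a2 := fun h => absurd (hinj h) (by decide)
  have h12 : a1 ≠ a2 := fun h => absurd (hinj h) (by decide)
  have hindep : M.Indep {a0, a1, a2} := hrange ▸ hbase.indep
  have hsub : ∀ x y : E, ({x, y} : Set E) ⊆ M.E := fun x y => by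
    rw [hM]; exact Set.subset_univ _
  have hmem : ∀ x y : E, x ∈ M.closure {x, y} := fun x y =>
    M.subset_closure {x, y} (hsub x y) (Set.mem_insert _ _)
  have hmem' : ∀ x y : E, y ∈ M.closure {x, y} := fun x y =>
    M.subset_closure {x, y} (hsub x y) (Set.mem_insert_of_mem _ rfl)
  have hn2 : a2 ∉ M.closure {a0, a1} := by
    refine not_mem_closure_pair hindep ?_
    intro h
    rcases h with h | h
    · exact h02 h.symm
    · exact h12 (Set.mem_singleton_iff.mp h).symm
  have hn1 : a1 ∉ M.closure {a0, a2} := by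
    refine not_mem_closure_pair (M := M) (a0 := a0) (a1 := a2) (a2 := a1) ?_ ?_
    · have : ({a0, a2, a1} : Set E) = {a0, a1, a2} := by
        ext y; simp only [Set.mem_insert_iff, Set.mem_singleton_iff]; tauto
      rwa [this]
    · intro h
      rcases h with h | h
      · exact h01 h.symm
      · exact h12 (Set.mem_singleton_iff.mp h)
  have hn0 : a0 ∉ M.closure {a1, a2} := by
    refine not_mem_closure_pair (M := M) (a0 := a1) (a1 := a2) (a2 := a0) ?_ ?_
    · have : ({a1, a2, a0} : Set E) = {a0, a1, a2} := by
        ext y; simp only [Set.mem_insert_iff, Set.mem_singleton_iff]; tauto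
      rwa [this]
    · intro h
      rcases h with h | h
      · exact h01 h
      · exact h02 (Set.mem_singleton_iff.mp h)
  have hF1 : Rank2Flat M (M.closure {a0, a1}) :=
    ⟨flat_closure_aux M _, {a0, a1}, (hsimple.2 a0 a1 h01).isBasis_closure, Set.ncard_pair h01⟩
  have hF2 : Rank2Flat M (M.closure {a0, a2}) :=
    ⟨flat_closure_aux M _, {a0, a2}, (hsimple.2 a0 a2 h02).isBasis_closure, Set.ncard_pair h02⟩
  have hF3 : Rank2Flat M (M.closure {a1, a2}) :=
    ⟨flat_closure_aux M _, {a1, a2}, (hsimple.2 a1 a2 h12).isBasis_closure, Set.ncard_pair h12⟩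
  have hempty : M.closure {a0, a1} ∩ M.closure {a0, a2} ∩ M.closure {a1, a2} = ∅ := by
    rw [Set.eq_empty_iff_forall_notMem]
    rintro x ⟨⟨hx1, hx2⟩, hx3⟩
    have hxa0 : x ≠ a0 := by rintro rfl; exact hn0 hx3
    exact no_common_point hM hsimple hn2 hxa0 hx1 hx2
  have hne := htriangle _ _ _ hF1 hF2 hF3
    ⟨a0, hmem a0 a1, hmem a0 a2⟩ ⟨a1, hmem' a0 a1, hmem a1 a2⟩
    ⟨a2, hmem' a0 a2, hmem' a1 a2⟩ hempty
  obtain ⟨a₄, ha₄⟩ := (Set.ne_univ_iff_exists_notMem _).mp hne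
  have hg1 : a₄ ∉ M.closure {a0, a1} := fun h => ha₄ (Or.inl (Or.inl h))
  have hg2 : a₄ ∉ M.closure {a0, a2} := fun h => ha₄ (Or.inl (Or.inr h))
  have hg3 : a₄ ∉ M.closure {a1, a2} := fun h => ha₄ (Or.inr h)
  have hnotmem : a₄ ∉ Set.range A := by
    rw [hrange]
    intro hmemA
    simp only [Set.mem_insert_iff, Set.mem_singleton_iff] at hmemA
    rcases hmemA with h | h | h
    · exact hg1 (by rw [h]; exact hmem a0 a1)
    · exact hg1 (by rw [h]; exact hmem' a0 a1)
    · exact hg2 (by rw [h]; exact hmem' a0 a2)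
  refine ⟨a₄, snoc_inj hinj hnotmem, ?_, ?_⟩
  · rw [range_snoc_aux]
    intro hind
    have h := ((hbase.indep.insert_indep_iff_of_notMem hnotmem).mp hind).2
    rw [hbase.closure_eq, hM] at h
    exact h (Set.mem_univ a₄)
  · intro a ha
    rw [range_snoc_aux, hrange] at ha ⊢
    have hnm : a₄ ∉ ({a0, a1, a2} : Set E) := hrange ▸ hnotmem
    simp only [Set.mem_insert_iff, Set.mem_singleton_iff] at ha
    rcases ha with rfl | rfl | rfl | rfl
    · refine hindep.subset ?_
      intro x hx
      rw [Set.mem_diff] at hx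
      rcases hx.1 with rfl | h
      · exact absurd rfl hx.2
      · exact h
    · refine (indep_insert_of_not_mem_closure hM (hsimple.2 a1 a2 h12) hg3).subset ?_
      intro x hx
      rw [Set.mem_diff] at hx
      have hx1 := hx.1
      have hx2 := hx.2
      simp only [Set.mem_insert_iff, Set.mem_singleton_iff] at hx1 hx2 ⊢
      tauto
    · refine (indep_insert_of_not_mem_closure hM (hsimple.2 a0 a2 h02) hg2).subset ?_
      intro x hx
      rw [Set.mem_diff] at hx
      have hx1 := hx.1
      have hx2 := hx.2
      simp only [Set.mem_insert_iff, Set.mem_singleton_iff] at hx1 hx2 ⊢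
      tauto
    · refine (indep_insert_of_not_mem_closure hM (hsimple.2 a0 a1 h01) hg1).subset ?_
      intro x hx
      rw [Set.mem_diff] at hx
      have hx1 := hx.1
      have hx2 := hx.2
      simp only [Set.mem_insert_iff, Set.mem_singleton_iff] at hx1 hx2 ⊢
      tauto

section MainCases

variable {E : Type} [Fintype E] {M : Matroid E}

lemma row_case (hM : M.E = Set.univ)
    (hsimple : (∀ x : E, M.Indep {x}) ∧ ∀ x y : E, x ≠ y → M.Indep {x, y})
    (hrank3 : ∃ B : Set E, M.IsBase B ∧ B.ncard = 3)
    (htriangle : ∀ F₁ F₂ F₃ : Set E,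
      Rank2Flat M F₁ → Rank2Flat M F₂ → Rank2Flat M F₃ →
      (F₁ ∩ F₂).Nonempty → (F₁ ∩ F₃).Nonempty → (F₂ ∩ F₃).Nonempty →
      F₁ ∩ F₂ ∩ F₃ = ∅ →
      F₁ ∪ F₂ ∪ F₃ ≠ Set.univ)
    {k : ℕ} {A B : Fin k → E}
    (hA : (⟨k, A⟩ : Tup E) ∈ baseTuples M) (hB : (⟨k, B⟩ : Tup E) ∉ baseTuples M) :
    uProd E A B ∈ qIdeal E (circuitTuples M) := by
  obtain ⟨hAinj, hAbase⟩ := hA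
  have hk : k = 3 := by
    have h1 : (Set.range A).ncard = k := ncard_range_inj hAinj
    obtain ⟨B0, hB0, hc⟩ := hrank3
    have h2 : (Set.range A).ncard = B0.ncard := hAbase.ncard_eq_ncard_of_isBase hB0
    omega
  subst hk
  have hAnc : (⟨3, A⟩ : Tup E) ∉ circuitTuples M :=
    not_circuitTuple_of_indep (by decide) hAbase.indep
  by_cases hinjB : Function.Injective B
  · have hBnc : (Set.range B).ncard = 3 := ncard_range_inj hinjB
    have hdep : ¬ M.Indep (Set.range B) := fun hind =>
      hB ⟨hinjB, base_of_indep_ncard3 hrank3 hind hBnc⟩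
    have hb01 : B 0 ≠ B 1 := fun h => absurd (hinjB h) (by decide)
    have hb02 : B 0 ≠ B 2 := fun h => absurd (hinjB h) (by decide)
    have hb12 : B 1 ≠ B 2 := fun h => absurd (hinjB h) (by decide)
    have hcirc : IsCircuitSet M (Set.range B) := by
      refine ⟨hdep, ?_⟩
      intro a ha
      rw [range_fin3] at ha ⊢
      simp only [Set.mem_insert_iff, Set.mem_singleton_iff] at ha
      rcases ha with rfl | rfl | rfl
      · refine (hsimple.2 (B 1) (B 2) hb12).subset ?_
        intro x hx
        rw [Set.mem_diff] at hx
        have hx1 := hx.1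
        have hx2 := hx.2
        simp only [Set.mem_insert_iff, Set.mem_singleton_iff] at hx1 hx2 ⊢
        tauto
      · refine (hsimple.2 (B 0) (B 2) hb02).subset ?_
        intro x hx
        rw [Set.mem_diff] at hx
        have hx1 := hx.1
        have hx2 := hx.2
        simp only [Set.mem_insert_iff, Set.mem_singleton_iff] at hx1 hx2 ⊢
        tauto
      · refine (hsimple.2 (B 0) (B 1) hb01).subset ?_
        intro x hx
        rw [Set.mem_diff] at hx
        have hx1 := hx.1
        have hx2 := hx.2
        simp only [Set.mem_insert_iff, Set.mem_singleton_iff] at hx1 hx2 ⊢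
        tauto
    exact mem_qIdeal_of_gen ⟨3, A, B, Or.inr ⟨Or.inr ⟨hinjB, hcirc⟩, hAnc⟩, rfl⟩
  · obtain ⟨a₄, hsnocinj, hsnoccirc⟩ := exists_fourth hM hsimple htriangle hAinj hAbase
    refine mem_of_forall_snoc_row A B a₄ (fun d => ?_)
    refine mem_qIdeal_of_gen ⟨4, _, _, Or.inl ⟨Or.inr ⟨hsnocinj, hsnoccirc⟩, ?_⟩, rfl⟩
    exact not_circuitTuple_of_not_inj (by decide) (snoc_not_inj hinjB d)

lemma col_case (hM : M.E = Set.univ)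
    (hsimple : (∀ x : E, M.Indep {x}) ∧ ∀ x y : E, x ≠ y → M.Indep {x, y})
    (hrank3 : ∃ B : Set E, M.IsBase B ∧ B.ncard = 3)
    (htriangle : ∀ F₁ F₂ F₃ : Set E,
      Rank2Flat M F₁ → Rank2Flat M F₂ → Rank2Flat M F₃ →
      (F₁ ∩ F₂).Nonempty → (F₁ ∩ F₃).Nonempty → (F₂ ∩ F₃).Nonempty →
      F₁ ∩ F₂ ∩ F₃ = ∅ →
      F₁ ∪ F₂ ∪ F₃ ≠ Set.univ)
    {k : ℕ} {A B : Fin k → E}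
    (hB : (⟨k, B⟩ : Tup E) ∈ baseTuples M) (hA : (⟨k, A⟩ : Tup E) ∉ baseTuples M) :
    uProd E A B ∈ qIdeal E (circuitTuples M) := by
  obtain ⟨hBinj, hBbase⟩ := hB
  have hk : k = 3 := by
    have h1 : (Set.range B).ncard = k := ncard_range_inj hBinj
    obtain ⟨B0, hB0, hc⟩ := hrank3
    have h2 : (Set.range B).ncard = B0.ncard := hBbase.ncard_eq_ncard_of_isBase hB0
    omega
  subst hk
  have hBnc : (⟨3, B⟩ : Tup E) ∉ circuitTuples M :=
    not_circuitTuple_of_indep (by decide) hBbase.indep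
  by_cases hinjA : Function.Injective A
  · have hAnc : (Set.range A).ncard = 3 := ncard_range_inj hinjA
    have hdep : ¬ M.Indep (Set.range A) := fun hind =>
      hA ⟨hinjA, base_of_indep_ncard3 hrank3 hind hAnc⟩
    have hb01 : A 0 ≠ A 1 := fun h => absurd (hinjA h) (by decide)
    have hb02 : A 0 ≠ A 2 := fun h => absurd (hinjA h) (by decide)
    have hb12 : A 1 ≠ A 2 := fun h => absurd (hinjA h) (by decide)
    have hcirc : IsCircuitSet M (Set.range A) := by
      refine ⟨hdep, ?_⟩
      intro a ha
      rw [range_fin3] at ha ⊢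
      simp only [Set.mem_insert_iff, Set.mem_singleton_iff] at ha
      rcases ha with rfl | rfl | rfl
      · refine (hsimple.2 (A 1) (A 2) hb12).subset ?_
        intro x hx
        rw [Set.mem_diff] at hx
        have hx1 := hx.1
        have hx2 := hx.2
        simp only [Set.mem_insert_iff, Set.mem_singleton_iff] at hx1 hx2 ⊢
        tauto
      · refine (hsimple.2 (A 0) (A 2) hb02).subset ?_
        intro x hx
        rw [Set.mem_diff] at hx
        have hx1 := hx.1
        have hx2 := hx.2
        simp only [Set.mem_insert_iff, Set.mem_singleton_iff] at hx1 hx2 ⊢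
        tauto
      · refine (hsimple.2 (A 0) (A 1) hb01).subset ?_
        intro x hx
        rw [Set.mem_diff] at hx
        have hx1 := hx.1
        have hx2 := hx.2
        simp only [Set.mem_insert_iff, Set.mem_singleton_iff] at hx1 hx2 ⊢
        tauto
    exact mem_qIdeal_of_gen ⟨3, A, B, Or.inl ⟨Or.inr ⟨hinjA, hcirc⟩, hBnc⟩, rfl⟩
  · obtain ⟨b₄, hsnocinj, hsnoccirc⟩ := exists_fourth hM hsimple htriangle hBinj hBbase
    refine mem_of_forall_snoc_col A B b₄ (fun x => ?_)
    refine mem_qIdeal_of_gen ⟨4, _, _, Or.inr ⟨Or.inr ⟨hsnocinj, hsnoccirc⟩, ?_⟩, rfl⟩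
    exact not_circuitTuple_of_not_inj (by decide) (snoc_not_inj hinjA x)

end MainCases

/-- Let `M` be a simple rank-3 matroid on ground set `E`.  If
`E ≠ F₁ ∪ F₂ ∪ F₃` for every triangle `{F₁, F₂, F₃}` of `M`, then
`I(QAut_ℬ(M)) ⊆ I(QAut_𝒞(M))`, i.e. `QAut_𝒞(M) ≤ QAut_ℬ(M)`. -/
theorem qIdeal_base_le_qIdeal_circuit (E : Type) [Fintype E] [Nonempty E]
    (M : Matroid E) (hM : M.E = Set.univ)
    (hsimple : (∀ x : E, M.Indep {x}) ∧ ∀ x y : E, x ≠ y → M.Indep {x, y})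
    (hrank3 : ∃ B : Set E, M.IsBase B ∧ B.ncard = 3)
    (htriangle : ∀ F₁ F₂ F₃ : Set E,
      Rank2Flat M F₁ → Rank2Flat M F₂ → Rank2Flat M F₃ →
      (F₁ ∩ F₂).Nonempty → (F₁ ∩ F₃).Nonempty → (F₂ ∩ F₃).Nonempty →
      F₁ ∩ F₂ ∩ F₃ = ∅ →
      F₁ ∪ F₂ ∪ F₃ ≠ Set.univ) :
    qIdeal E (baseTuples M) ≤ qIdeal E (circuitTuples M) := by
  intro x hx
  refine TwoSidedIdeal.mem_span_iff.mp hx (qIdeal E (circuitTuples M)) ?_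
  rintro y (hy | hy)
  · exact mem_qIdeal_of_mem_symRels hy
  · obtain ⟨k, A, B, hxor, rfl⟩ := hy
    rcases hxor with ⟨hA, hB⟩ | ⟨hB, hA⟩
    · exact row_case hM hsimple hrank3 htriangle hA hB
    · exact col_case hM hsimple hrank3 htriangle hB hA

end
end

section
/- For every matroid M on a nonempty finite ground set E, the flats quantum automorphism group QAut_ℱ(M) is commutative: u_{ab}u_{cd} = u_{cd}u_{ab} holds in QAut_ℱ(M) for all a,b,c,d ∈ E. (Hence QAut_ℱ(M) is isomorphic to the algebra C(Aut(M)) of ℂ-valued functions on the automorphism group of M.) -/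
/-!
STATEMENT 7: For every matroid M on a nonempty finite ground set E, the flats quantum
automorphism group QAut_ℱ(M) is commutative: u_{ab}u_{cd} = u_{cd}u_{ab} in QAut_ℱ(M)
for all a, b, c, d ∈ E.  (Hence QAut_ℱ(M) ≅ C(Aut(M)).)

We model a matroid on E as a Mathlib `Matroid E` with ground set all of `E`, and the
defining ideal of QAut_ℱ(M) (an ideal of 𝔖⁺(E)) by its preimage `qIdeal E 𝒜` in ℂ⟨E²⟩,
where 𝒜 is the set of flat tuples: repetition-free tuples whose underlying set is a
flat of M.  An equation `x = y` in QAut_ℱ(M) is the membership `x - y ∈ qIdeal E 𝒜`.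
-/

noncomputable section

/-- Flat tuples of a matroid: repetition-free tuples whose underlying set is a flat. -/
def flatTuples {E : Type} (M : Matroid E) : Set (Tup E) :=
  {T | Function.Injective T.2 ∧ M.IsFlat (Set.range T.2)}

section Aux

variable {E : Type} [Fintype E]

lemma row_orth_mem (𝒜 : Set (Tup E)) (i k l : E) (h : k ≠ l) :
    u E i k * u E i l ∈ qIdeal E 𝒜 :=
  TwoSidedIdeal.subset_span (Or.inl (Or.inl (Or.inl (Or.inl (Or.inr ⟨i, k, l, h, rfl⟩)))))

lemma col_orth_mem (𝒜 : Set (Tup E)) (j k l : E) (h : k ≠ l) :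
    u E k j * u E l j ∈ qIdeal E 𝒜 :=
  TwoSidedIdeal.subset_span (Or.inl (Or.inl (Or.inl (Or.inr ⟨j, k, l, h, rfl⟩))))

lemma col_sum_mem (𝒜 : Set (Tup E)) (j : E) :
    (∑ k : E, u E k j) - 1 ∈ qIdeal E 𝒜 :=
  TwoSidedIdeal.subset_span (Or.inl (Or.inl (Or.inr ⟨j, rfl⟩)))

lemma row_sum_mem (𝒜 : Set (Tup E)) (i : E) :
    (∑ k : E, u E i k) - 1 ∈ qIdeal E 𝒜 :=
  TwoSidedIdeal.subset_span (Or.inl (Or.inr ⟨i, rfl⟩))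

lemma snoc_injective {k : ℕ} {B : Fin k → E} {y : E} (hB : Function.Injective B)
    (hy : ∀ t, B t ≠ y) : Function.Injective (Fin.snoc B y) := by
  intro i j h
  rcases Fin.eq_castSucc_or_eq_last i with ⟨i', rfl⟩ | rfl <;>
    rcases Fin.eq_castSucc_or_eq_last j with ⟨j', rfl⟩ | rfl
  · simp only [Fin.snoc_castSucc] at h
    exact congrArg Fin.castSucc (hB h)
  · simp only [Fin.snoc_castSucc, Fin.snoc_last] at h
    exact absurd h (hy i')
  · simp only [Fin.snoc_castSucc, Fin.snoc_last] at h
    exact absurd h.symm (hy j')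
  · rfl

/-- Key lemma: `u_{AB} ∈ I_𝒜` whenever `B` is injective but `A` is not, provided `𝒜`
contains all bijective tuples and consists only of injective tuples. -/
lemma key_mem (𝒜 : Set (Tup E))
    (h1 : ∀ (k : ℕ) (B : Fin k → E), Function.Bijective B → (⟨k, B⟩ : Tup E) ∈ 𝒜)
    (h2 : ∀ (k : ℕ) (A : Fin k → E), (⟨k, A⟩ : Tup E) ∈ 𝒜 → Function.Injective A) :
    ∀ (m k : ℕ) (A B : Fin k → E), Fintype.card E ≤ k + m →
      Function.Injective B → ¬ Function.Injective A → uProd E A B ∈ qIdeal E 𝒜 := by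
  intro m
  induction m with
  | zero =>
    intro k A B hcard hB hA
    have hk : k ≤ Fintype.card E := by
      have := Fintype.card_le_of_injective B hB
      rwa [Fintype.card_fin] at this
    have hbij : Function.Bijective B := by
      rw [Fintype.bijective_iff_injective_and_card]
      exact ⟨hB, by rw [Fintype.card_fin]; omega⟩
    refine TwoSidedIdeal.subset_span (Or.inr ⟨k, A, B, ?_, rfl⟩)
    exact Or.inr ⟨h1 k B hbij, fun hmem => hA (h2 k A hmem)⟩
  | succ m ih =>
    intro k A B hcard hB hA
    by_cases hk : Fintype.card E ≤ k
    · exact ih k A B (by omega) hB hA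
    · push_neg at hk
      -- pick y outside the range of B
      have hnsurj : ¬ Function.Surjective B := fun hs => by
        have := Fintype.card_le_of_surjective B hs
        simp at this; omega
      rw [Function.Surjective] at hnsurj
      push_neg at hnsurj
      obtain ⟨y, hy⟩ := hnsurj
      have hterm : ∀ x : E, uProd E (Fin.snoc A x) (Fin.snoc B y) ∈ qIdeal E 𝒜 := by
        intro x
        refine ih (k + 1) _ _ (by omega) (snoc_injective hB fun t h => hy t h) ?_
        intro hinj
        apply hA
        have : A = (Fin.snoc A x) ∘ Fin.castSucc := by
          funext i; simp [Fin.snoc_castSucc]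
        rw [this]
        exact hinj.comp (Fin.castSucc_injective k)
      have heq : uProd E A B =
          (∑ x : E, uProd E (Fin.snoc A x) (Fin.snoc B y))
            - uProd E A B * ((∑ x : E, u E x y) - 1) := by
        simp only [uProd_snoc, mul_sub, mul_one, ← Finset.mul_sum]
        abel
      rw [heq]
      exact TwoSidedIdeal.sub_mem _
        (TwoSidedIdeal.finsetSum_mem _ _ _ fun x _ => hterm x)
        (TwoSidedIdeal.mul_mem_left _ _ _ (col_sum_mem 𝒜 y))

lemma triple_inj {p q r : E} (h1 : p ≠ q) (h2 : p ≠ r) (h3 : q ≠ r) :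
    Function.Injective ![p, q, r] := by
  intro i j hij
  fin_cases i <;> fin_cases j <;> simp_all

lemma triple_noninj (x z : E) : ¬ Function.Injective ![x, z, x] := by
  intro h
  have : (0 : Fin 3) = 2 := h (by simp [Matrix.cons_val_zero])
  simp at this

lemma uProd_triple (x z p q r : E) :
    uProd E ![x, z, x] ![p, q, r] = u E x p * (u E z q * u E x r) := by
  simp [uProd, List.ofFn_succ, mul_assoc]

end Aux

/-- For every matroid `M` on a nonempty finite ground set `E`, the
flats quantum automorphism group `QAut_ℱ(M)` is commutative:
`u_{ab}u_{cd} = u_{cd}u_{ab}` in `QAut_ℱ(M)` for all `a, b, c, d ∈ E`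
(hence `QAut_ℱ(M) ≅ C(Aut(M))`). -/
theorem qIdeal_flat_commutative (E : Type) [Fintype E] [Nonempty E]
    (M : Matroid E) (hM : M.E = Set.univ) :
    ∀ a b c d : E,
      u E a b * u E c d - u E c d * u E a b ∈ qIdeal E (flatTuples M) := by
  classical
  set 𝒜 := flatTuples M with h𝒜
  set I := qIdeal E 𝒜 with hI
  have hbij : ∀ (k : ℕ) (B : Fin k → E), Function.Bijective B → (⟨k, B⟩ : Tup E) ∈ 𝒜 := by
    intro k B hB
    refine ⟨hB.injective, ?_⟩
    have : Set.range B = Set.univ := Set.range_eq_univ.mpr hB.surjective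
    rw [this, ← hM]
    exact M.ground_isFlat
  have hinj : ∀ (k : ℕ) (A : Fin k → E), (⟨k, A⟩ : Tup E) ∈ 𝒜 → Function.Injective A :=
    fun k A hA => hA.1
  -- the key vanishing: non-injective row tuple, injective column tuple
  have key : ∀ (x z p q r : E), p ≠ q → p ≠ r → q ≠ r →
      u E x p * (u E z q * u E x r) ∈ I := by
    intro x z p q r h1 h2 h3
    have := key_mem 𝒜 hbij hinj (Fintype.card E) 3 ![x, z, x] ![p, q, r]
      (by omega) (triple_inj h1 h2 h3) (triple_noninj x z)
    rwa [uProd_triple] at this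
  intro a b c d
  by_cases hac : a = c
  · subst hac
    by_cases hbd : b = d
    · subst hbd; simp only [sub_self]; exact TwoSidedIdeal.zero_mem I
    · exact TwoSidedIdeal.sub_mem _ (row_orth_mem 𝒜 a b d hbd)
        (row_orth_mem 𝒜 a d b (Ne.symm hbd))
  · by_cases hbd : b = d
    · subst hbd
      exact TwoSidedIdeal.sub_mem _ (col_orth_mem 𝒜 b a c hac)
        (col_orth_mem 𝒜 b c a (Ne.symm hac))
    · -- main case : a ≠ c, b ≠ d
      have hdecomp : u E a b * u E c d - u E c d * u E a b =
          -(((∑ d' : E, u E c d') - 1) * (u E a b * u E c d))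
          + (∑ d' ∈ Finset.univ.erase d, u E c d' * (u E a b * u E c d))
          + -(∑ d' ∈ Finset.univ.erase d, u E c d * (u E a b * u E c d'))
          + (u E c d * u E a b) * ((∑ d' : E, u E c d') - 1) := by
        rw [Finset.sum_erase_eq_sub (Finset.mem_univ d),
            Finset.sum_erase_eq_sub (Finset.mem_univ d)]
        simp only [sub_mul, mul_sub, one_mul, mul_one, Finset.sum_mul, Finset.mul_sum,
          mul_assoc]
        abel
      rw [hdecomp]
      refine TwoSidedIdeal.add_mem _ (TwoSidedIdeal.add_mem _ (TwoSidedIdeal.add_mem _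
        (TwoSidedIdeal.neg_mem _ ?_) ?_) (TwoSidedIdeal.neg_mem _ ?_)) ?_
      · exact TwoSidedIdeal.mul_mem_right _ _ _ (row_sum_mem 𝒜 c)
      · refine TwoSidedIdeal.finsetSum_mem _ _ _ fun d' hd' => ?_
        have hd'd : d' ≠ d := Finset.ne_of_mem_erase hd'
        by_cases hd'b : d' = b
        · rw [hd'b, ← mul_assoc]
          exact TwoSidedIdeal.mul_mem_right _ _ _ (col_orth_mem 𝒜 b c a (Ne.symm hac))
        · exact key c a d' b d hd'b hd'd hbd
      · refine TwoSidedIdeal.finsetSum_mem _ _ _ fun d' hd' => ?_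
        have hd'd : d' ≠ d := Finset.ne_of_mem_erase hd'
        by_cases hd'b : d' = b
        · rw [hd'b]
          exact TwoSidedIdeal.mul_mem_left _ _ _ (col_orth_mem 𝒜 b a c hac)
        · exact key c a d b d' (fun h => hbd h.symm) (fun h => hd'd h.symm)
            (fun h => hd'b h.symm)
      · exact TwoSidedIdeal.mul_mem_left _ _ _ (row_sum_mem 𝒜 c)


end
end

section
/- Let M be a matroid on a nonempty finite ground set E. For a permutation σ of E, let φ_σ : ℂ⟨E²⟩ → ℂ be the unital algebra homomorphism with φ_σ(u_{ij}) = 1 if σ(i) = j and φ_σ(u_{ij}) = 0 otherwise. Then φ_σ vanishes on the two-sided ideal of ℂ⟨E²⟩ generated by I_E together with all elements u_{AB} where exactly one of the tuples A, B is an independent tuple of M, if and only if σ is an automorphism of M. -/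
/-!
STATEMENT 8: For a permutation σ of E, let φ_σ : ℂ⟨E²⟩ → ℂ be the unital algebra
homomorphism with φ_σ(u_{ij}) = 1 if σ(i) = j and 0 otherwise.  Then φ_σ vanishes on
the two-sided ideal generated by I_E together with all u_{AB} with exactly one of A, B
an independent tuple of M, if and only if σ is an automorphism of M.

We model a matroid on E as a Mathlib `Matroid E` with ground set all of `E`.  The ideal
in question is `qIdeal E (indepTuples M)`.  An automorphism of M is a permutation σ such
that for every set B, B is a basis iff σ(B) is a basis (this says exactly that σ maps
bases to bases and so does its inverse).
-/

noncomputable section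

/-- The evaluation homomorphism `φ_σ : ℂ⟨E²⟩ → ℂ`, `u_{ij} ↦ [σ(i) = j]`. -/
def phiPerm (E : Type) [DecidableEq E] (σ : Equiv.Perm E) :
    FreeAlgebra ℂ (E × E) →ₐ[ℂ] ℂ :=
  FreeAlgebra.lift ℂ (fun p : E × E => if σ p.1 = p.2 then (1 : ℂ) else 0)


lemma phi_u (E : Type) [DecidableEq E] (σ : Equiv.Perm E) (i j : E) :
    phiPerm E σ (u E i j) = if σ i = j then 1 else 0 :=
  FreeAlgebra.lift_ι_apply _ _

lemma phi_uProd (E : Type) [DecidableEq E] (σ : Equiv.Perm E) {k : ℕ}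
    (A B : Fin k → E) :
    phiPerm E σ (uProd E A B) = if (∀ t, σ (A t) = B t) then 1 else 0 := by
  unfold uProd
  rw [map_list_prod, List.map_ofFn, List.prod_ofFn]
  by_cases h : ∀ t, σ (A t) = B t
  · simp [h, Function.comp, phi_u]
  · push_neg at h
    obtain ⟨t, ht⟩ := h
    rw [if_neg (by push_neg; exact ⟨t, ht⟩)]
    exact Finset.prod_eq_zero (Finset.mem_univ t) (by simp [Function.comp, phi_u, ht])

/-- subset transfer for equivs -/
lemma img_subset_iff {E : Type} (σ : Equiv.Perm E) (X Y : Set E) :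
    σ '' X ⊆ Y ↔ X ⊆ σ.symm '' Y := by
  constructor
  · intro h x hx
    exact ⟨σ x, h ⟨x, hx, rfl⟩, σ.symm_apply_apply x⟩
  · intro h y hy
    obtain ⟨x, hx, rfl⟩ := hy
    obtain ⟨z, hz, hzx⟩ := h hx
    rwa [← hzx, σ.apply_symm_apply]

lemma img_symm_img {E : Type} (σ : Equiv.Perm E) (X : Set E) :
    σ '' (σ.symm '' X) = X := by
  simp [Set.image_image]

lemma symm_img_img {E : Type} (σ : Equiv.Perm E) (X : Set E) :
    σ.symm '' (σ '' X) = X := by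
  simp [Set.image_image]

/-- If σ maps bases to bases (in both directions), it preserves independence. -/
lemma indep_image_iff {E : Type} (M : Matroid E) (σ : Equiv.Perm E)
    (h : ∀ B : Set E, M.IsBase B ↔ M.IsBase (σ '' B)) (I : Set E) :
    M.Indep I ↔ M.Indep (σ '' I) := by
  rw [Matroid.indep_iff, Matroid.indep_iff]
  constructor
  · rintro ⟨B, hB, hIB⟩
    exact ⟨σ '' B, (h B).1 hB, Set.image_mono hIB⟩
  · rintro ⟨B, hB, hIB⟩
    refine ⟨σ.symm '' B, ?_, ?_⟩
    · rw [h (σ.symm '' B), img_symm_img σ B]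
      exact hB
    · exact (img_subset_iff σ I B).1 hIB

/-- If σ preserves independence, it preserves maximal independent sets one way. -/
lemma base_image_of_indep_iff {E : Type} (M : Matroid E) (σ : Equiv.Perm E)
    (h : ∀ S : Set E, M.Indep S ↔ M.Indep (σ '' S)) {B : Set E}
    (hB : M.IsBase B) : M.IsBase (σ '' B) := by
  rw [Matroid.isBase_iff_maximal_indep, maximal_subset_iff'] at hB ⊢
  refine ⟨(h B).1 hB.1, fun C hC hBC => ?_⟩
  have hC' : M.Indep (σ.symm '' C) := by
    rw [h (σ.symm '' C), img_symm_img]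
    exact hC
  have : σ.symm '' C ⊆ B := hB.2 hC' (by
    show B ⊆ σ.symm '' C
    rw [← img_subset_iff]
    exact hBC)
  intro y hy
  obtain ⟨x, hx⟩ : ∃ x, σ x = y := ⟨σ.symm y, σ.apply_symm_apply y⟩
  exact ⟨x, this ⟨y, hy, by rw [← hx, σ.symm_apply_apply]⟩, hx⟩

/-- `φ_σ` vanishes on the two-sided ideal generated by `I_E` and the
elements `u_{AB}` with exactly one of `A`, `B` an independent tuple of `M`, if and only
if `σ` is an automorphism of the matroid `M`. -/
theorem phiPerm_vanishes_iff_aut (E : Type) [Fintype E] [Nonempty E] [DecidableEq E]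
    (M : Matroid E) (hM : M.E = Set.univ) (σ : Equiv.Perm E) :
    (∀ x ∈ qIdeal E (indepTuples M), phiPerm E σ x = 0) ↔
    (∀ B : Set E, M.IsBase B ↔ M.IsBase (σ '' B)) := by
  constructor
  · -- forward: vanishing ⇒ automorphism
    intro h
    -- Step 1: independence is preserved on sets
    have key : ∀ S : Set E, M.Indep S ↔ M.Indep (σ '' S) := by
      intro S
      haveI : Fintype S := (Set.toFinite S).fintype
      set n := Fintype.card S with hn
      obtain ⟨e⟩ : Nonempty (Fin n ≃ S) := ⟨(Fintype.equivFin S).symm⟩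
      set A : Fin n → E := fun t => (e t : E) with hA
      have hAinj : Function.Injective A :=
        Subtype.val_injective.comp e.injective
      have hArange : Set.range A = S := by
        ext x
        constructor
        · rintro ⟨t, rfl⟩; exact (e t).2
        · intro hx; exact ⟨e.symm ⟨x, hx⟩, by simp [hA]⟩
      -- the element u_{A, σ∘A} is in the ideal iff Xor holds; φ of it is 1
      have hφ : phiPerm E σ (uProd E A (σ ∘ A)) = 1 := by
        rw [phi_uProd]
        simp
      have hnotxor : ¬ Xor' ((⟨n, A⟩ : Tup E) ∈ indepTuples M)
          ((⟨n, σ ∘ A⟩ : Tup E) ∈ indepTuples M) := by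
        intro hxor
        have hmem : uProd E A (σ ∘ A) ∈ qIdeal E (indepTuples M) :=
          TwoSidedIdeal.subset_span (Or.inr ⟨n, A, σ ∘ A, hxor, rfl⟩)
        have := h _ hmem
        rw [hφ] at this
        exact one_ne_zero this
      replace hnotxor := (not_xor _ _).1 hnotxor
      -- unpack the iff
      have h1 : ((⟨n, A⟩ : Tup E) ∈ indepTuples M) ↔ M.Indep S := by
        simp only [indepTuples, Set.mem_setOf_eq, hArange]
        exact and_iff_right hAinj
      have h2 : ((⟨n, σ ∘ A⟩ : Tup E) ∈ indepTuples M) ↔ M.Indep (σ '' S) := by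
        simp only [indepTuples, Set.mem_setOf_eq]
        rw [Set.range_comp, hArange]
        exact and_iff_right (σ.injective.comp hAinj)
      rw [h1, h2] at hnotxor
      exact hnotxor
    -- Step 2: bases
    intro B
    constructor
    · exact fun hB => base_image_of_indep_iff M σ key hB
    · intro hB
      have key' : ∀ S : Set E, M.Indep S ↔ M.Indep (σ.symm '' S) := by
        intro S
        conv_lhs => rw [← img_symm_img σ S]
        rw [← key (σ.symm '' S)]
      have := base_image_of_indep_iff M σ.symm key' hB
      rwa [symm_img_img] at this
  · -- backward: automorphism ⇒ vanishing
    intro h x hx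
    have hker : symRels E ∪ tupleGens E (indepTuples M) ⊆
        (TwoSidedIdeal.ker (phiPerm E σ) : Set (FreeAlgebra ℂ (E × E))) := by
      intro y hy
      rw [SetLike.mem_coe, TwoSidedIdeal.mem_ker]
      rcases hy with (((((⟨i, j, rfl⟩ | ⟨i, k, l, hkl, rfl⟩) | ⟨j, k, l, hkl, rfl⟩) |
          ⟨j, rfl⟩) | ⟨i, rfl⟩) | ⟨k, A, B, hxor, rfl⟩)
      · rw [map_sub, map_mul, phi_u]
        split_ifs <;> ring
      · rw [map_mul, phi_u, phi_u]
        split_ifs with h1 h2 h3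
        · exact absurd (h1.symm.trans h2) hkl
        all_goals ring
      · rw [map_mul, phi_u, phi_u]
        split_ifs with h1 h2 h3
        · exact absurd (σ.injective (h1.trans h2.symm)) hkl
        all_goals ring
      · rw [map_sub, map_sum, map_one]
        simp only [phi_u]
        simp [Equiv.apply_eq_iff_eq_symm_apply]
      · rw [map_sub, map_sum, map_one]
        simp only [phi_u]
        simp
      · rw [phi_uProd]
        rw [if_neg]
        intro hall
        have hBA : B = σ ∘ A := funext fun t => (hall t).symm
        apply (not_xor _ _).2 _ hxor
        subst hBA
        have hinj : Function.Injective A ↔ Function.Injective (σ ∘ A) :=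
          ⟨fun hA => σ.injective.comp hA, fun hA a b hab => hA (congrArg σ hab)⟩
        simp only [indepTuples, Set.mem_setOf_eq, Set.range_comp]
        rw [← hinj]
        constructor
        · rintro ⟨h1, h2⟩
          exact ⟨h1, (indep_image_iff M σ h _).1 h2⟩
        · rintro ⟨h1, h2⟩
          exact ⟨h1, (indep_image_iff M σ h _).2 h2⟩
    have := TwoSidedIdeal.mem_span_iff.1 hx (TwoSidedIdeal.ker (phiPerm E σ)) hker
    exact (TwoSidedIdeal.mem_ker (phiPerm E σ)).1 this


end
end

section
/- Let M be a matroid on a nonempty finite ground set E and let L ⊆ E be the set of loops of M. Then the defining ideal I(QAut_ℐ(M)) of the independent-sets quantum automorphism group equals the two-sided ideal of 𝔖⁺(E) generated by the elements u_{ij} with exactly one of i, j lying in L, together with the elements u_{AB} where A, B are tuples over E∖L of the same length such that exactly one of A, B is an independent tuple of the deletion M∖L. In other words, QAut_ℐ(M) is the free product 𝔖⁺(L) * QAut_ℐ(M∖L). -/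
/-!
STATEMENT 9: Let M be a matroid on a nonempty finite ground set E with loop set L.
Then I(QAut_ℐ(M)) equals the two-sided ideal of 𝔖⁺(E) generated by the u_{ij} with
exactly one of i, j in L together with the u_{AB} for same-length tuples A, B over E∖L
with exactly one of A, B an independent tuple of the deletion M∖L.  In other words,
QAut_ℐ(M) = 𝔖⁺(L) * QAut_ℐ(M∖L).

We model a matroid on E as a Mathlib `Matroid E` with ground set all of `E`; ideals of
𝔖⁺(E) are modelled by their preimages in ℂ⟨E²⟩, which always contain the defining
relations `symRels E` of 𝔖⁺(E).  The deletion M∖L is `M ↾ Lᶜ` (its independent sets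
are exactly the independent sets of M contained in E∖L).
-/

noncomputable section

/-- The set of loops of a matroid. -/
def loopSet {E : Type} (M : Matroid E) : Set E := {x | ¬ M.Indep {x}}

/-- The generators of the defining ideal of the free product
`𝔖⁺(L) * QAut_ℐ(M∖L)` inside `𝔖⁺(E)`: the `u_{ij}` with exactly one of `i, j` a loop,
together with the `u_{AB}` for same-length tuples `A`, `B` over `E∖L` such that exactly
one of `A`, `B` is an independent tuple of the deletion `M∖L`. -/
def freeProdGens (E : Type) [Fintype E] (M : Matroid E) : Set (FreeAlgebra ℂ (E × E)) :=
  {x | ∃ i j : E, Xor' (i ∈ loopSet M) (j ∈ loopSet M) ∧ x = u E i j} ∪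
  {x | ∃ (k : ℕ) (A B : Fin k → E),
    (∀ t, A t ∉ loopSet M) ∧ (∀ t, B t ∉ loopSet M) ∧
    Xor' ((⟨k, A⟩ : Tup E) ∈ indepTuples (M.restrict (loopSet M)ᶜ))
         ((⟨k, B⟩ : Tup E) ∈ indepTuples (M.restrict (loopSet M)ᶜ)) ∧
    x = uProd E A B}

lemma span_le' {R : Type*} [Ring R] {s : Set R} {I : TwoSidedIdeal R} (h : s ⊆ I) :
    TwoSidedIdeal.span s ≤ I := fun _ hx => TwoSidedIdeal.mem_span_iff.mp hx I h

/-- entries of independent tuples are non-loops -/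
lemma entry_not_loop {E : Type} {M : Matroid E} {k : ℕ} {A : Fin k → E}
    (hA : (⟨k, A⟩ : Tup E) ∈ indepTuples M) (t : Fin k) : A t ∉ loopSet M := by
  intro h
  exact h (hA.2.subset (by simp [Set.singleton_subset_iff, Set.mem_range_self]))

/-- for loop-free tuples, independence in M and in the deletion agree -/
lemma mem_indepTuples_restrict_iff {E : Type} {M : Matroid E} {k : ℕ} {A : Fin k → E}
    (hA : ∀ t, A t ∉ loopSet M) :
    (⟨k, A⟩ : Tup E) ∈ indepTuples (M.restrict (loopSet M)ᶜ) ↔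
      (⟨k, A⟩ : Tup E) ∈ indepTuples M := by
  have hsub : Set.range A ⊆ (loopSet M)ᶜ := by
    rintro x ⟨t, rfl⟩; exact hA t
  simp only [indepTuples, Set.mem_setOf_eq, Matroid.restrict_indep_iff]
  tauto

/-- if one factor of `uProd` lies in a two-sided ideal, so does the product -/
lemma uProd_mem_of_factor {E : Type} {k : ℕ} (A B : Fin k → E)
    {I : TwoSidedIdeal (FreeAlgebra ℂ (E × E))} (t : Fin k)
    (h : u E (A t) (B t) ∈ I) : uProd E A B ∈ I := by
  rw [uProd, List.ofFn_eq_map]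
  exact I.listProd_mem _ _ ⟨t, List.mem_finRange t, h⟩

lemma u_eq_uProd (E : Type) (i j : E) :
    u E i j = uProd E (fun _ : Fin 1 => i) (fun _ : Fin 1 => j) := by
  simp [uProd, List.ofFn_succ]

lemma const_mem_indepTuples_iff {E : Type} (M : Matroid E) (i : E) :
    (⟨1, fun _ : Fin 1 => i⟩ : Tup E) ∈ indepTuples M ↔ i ∉ loopSet M := by
  have hr : Set.range (fun _ : Fin 1 => i) = {i} := Set.range_const
  simp only [indepTuples, Set.mem_setOf_eq, hr, loopSet, Set.mem_setOf_eq, not_not]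
  constructor
  · exact fun h => h.2
  · exact fun h => ⟨fun a b _ => Subsingleton.elim a b, h⟩

/-- `I(QAut_ℐ(M))` equals the ideal of `𝔖⁺(E)` generated by the
`u_{ij}` with exactly one of `i, j` a loop, together with the `u_{AB}` for tuples over
`E∖L` with exactly one of `A`, `B` an independent tuple of `M∖L`; in other words,
`QAut_ℐ(M) = 𝔖⁺(L) * QAut_ℐ(M∖L)`. -/
theorem qIdeal_indep_eq_freeProd (E : Type) [Fintype E] [Nonempty E]
    (M : Matroid E) (hM : M.E = Set.univ) :
    qIdeal E (indepTuples M) = TwoSidedIdeal.span (symRels E ∪ freeProdGens E M) := by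
  apply le_antisymm
  · -- LHS ≤ RHS
    apply span_le'
    rintro x (hx | hx)
    · exact TwoSidedIdeal.subset_span (Set.mem_union_left _ hx)
    · obtain ⟨k, A, B, hxor, rfl⟩ := hx
      -- symmetric treatment of the two xor cases
      rcases hxor with ⟨hA, hB⟩ | ⟨hB, hA⟩
      · by_cases hBl : ∀ t, B t ∉ loopSet M
        · -- both loop-free: second family of generators
          apply TwoSidedIdeal.subset_span
          refine Set.mem_union_right _ (Set.mem_union_right _ ?_)
          exact ⟨k, A, B, fun t => entry_not_loop hA t, hBl,
            Or.inl ⟨(mem_indepTuples_restrict_iff (fun t => entry_not_loop hA t)).mpr hA,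
              fun h => hB ((mem_indepTuples_restrict_iff hBl).mp h)⟩, rfl⟩
        · -- some B t is a loop: use the factor u (A t) (B t)
          push_neg at hBl
          obtain ⟨t, ht⟩ := hBl
          apply uProd_mem_of_factor A B t
          apply TwoSidedIdeal.subset_span
          refine Set.mem_union_right _ (Set.mem_union_left _ ?_)
          exact ⟨A t, B t, Or.inr ⟨ht, entry_not_loop hA t⟩, rfl⟩
      · by_cases hAl : ∀ t, A t ∉ loopSet M
        · apply TwoSidedIdeal.subset_span
          refine Set.mem_union_right _ (Set.mem_union_right _ ?_)
          exact ⟨k, A, B, hAl, fun t => entry_not_loop hB t,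
            Or.inr ⟨(mem_indepTuples_restrict_iff (fun t => entry_not_loop hB t)).mpr hB,
              fun h => hA ((mem_indepTuples_restrict_iff hAl).mp h)⟩, rfl⟩
        · push_neg at hAl
          obtain ⟨t, ht⟩ := hAl
          apply uProd_mem_of_factor A B t
          apply TwoSidedIdeal.subset_span
          refine Set.mem_union_right _ (Set.mem_union_left _ ?_)
          exact ⟨A t, B t, Or.inl ⟨ht, entry_not_loop hB t⟩, rfl⟩
  · -- RHS ≤ LHS
    apply span_le'
    rintro x (hx | hx | hx)
    · exact TwoSidedIdeal.subset_span (Set.mem_union_left _ hx)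
    · -- u i j with exactly one of i, j a loop
      obtain ⟨i, j, hxor, rfl⟩ := hx
      apply TwoSidedIdeal.subset_span
      refine Set.mem_union_right _ ?_
      refine ⟨1, (fun _ : Fin 1 => i), (fun _ : Fin 1 => j), ?_, u_eq_uProd E i j⟩
      rw [const_mem_indepTuples_iff, const_mem_indepTuples_iff]
      rcases hxor with ⟨hi, hj⟩ | ⟨hj, hi⟩
      · exact Or.inr ⟨hj, not_not_intro hi⟩
      · exact Or.inl ⟨hi, not_not_intro hj⟩
    · -- u_{AB} for loop-free tuples with xor of restricted independence
      obtain ⟨k, A, B, hAl, hBl, hxor, rfl⟩ := hx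
      apply TwoSidedIdeal.subset_span
      refine Set.mem_union_right _ ?_
      refine ⟨k, A, B, ?_, rfl⟩
      rw [← mem_indepTuples_restrict_iff hAl, ← mem_indepTuples_restrict_iff hBl]
      exact hxor

end
end

section
/- Let M be a rank-1 matroid on a nonempty finite ground set E with loop set L. Then the defining ideal I(QAut_ℐ(M)) equals the two-sided ideal of 𝔖⁺(E) generated by the elements u_{ij} with exactly one of i, j lying in L; in other words, QAut_ℐ(M) is the free product 𝔖⁺(L) * 𝔖⁺(E∖L) of quantum symmetric groups. -/
/-!
STATEMENT 10: Let M be a rank-1 matroid on a nonempty finite ground set E with loop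
set L.  Then I(QAut_ℐ(M)) equals the two-sided ideal of 𝔖⁺(E) generated by the u_{ij}
with exactly one of i, j in L; in other words, QAut_ℐ(M) = 𝔖⁺(L) * 𝔖⁺(E∖L).

We model a matroid on E as a Mathlib `Matroid E` with ground set all of `E`; ideals of
𝔖⁺(E) are modelled by their preimages in ℂ⟨E²⟩, which always contain the defining
relations `symRels E` of 𝔖⁺(E).  "Rank 1" means M has a basis of cardinality 1.
-/

noncomputable section

lemma indep_ncard_le_one {E : Type} [Fintype E] (M : Matroid E)
    (hrank1 : ∃ B : Set E, M.IsBase B ∧ B.ncard = 1) {I : Set E} (hI : M.Indep I) :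
    I.ncard ≤ 1 := by
  obtain ⟨B, hB, hB1⟩ := hrank1
  obtain ⟨B', hB', hsub⟩ := hI.exists_isBase_superset
  have h2 : B'.ncard = B.ncard := hB'.ncard_eq_ncard_of_isBase hB
  have := Set.ncard_le_ncard hsub B'.toFinite
  omega

lemma len_le_one {E : Type} [Fintype E] (M : Matroid E)
    (hrank1 : ∃ B : Set E, M.IsBase B ∧ B.ncard = 1) {k : ℕ} {A : Fin k → E}
    (h : (⟨k, A⟩ : Tup E) ∈ indepTuples M) : k ≤ 1 := by
  obtain ⟨hinj, hind⟩ := h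
  have h1 : (Set.range A).ncard ≤ 1 := indep_ncard_le_one M hrank1 hind
  have h2 : (Set.range A).ncard = k := by
    rw [← Nat.card_coe_set_eq, Nat.card_range_of_injective hinj,
      Nat.card_eq_fintype_card, Fintype.card_fin]
  omega

lemma mem_one {E : Type} [Fintype E] (M : Matroid E) (A : Fin 1 → E) :
    (⟨1, A⟩ : Tup E) ∈ indepTuples M ↔ A 0 ∉ loopSet M := by
  have hr : Set.range A = {A 0} := by
    rw [Set.range_unique]; rfl
  constructor
  · rintro ⟨-, h⟩
    rw [hr] at h
    simpa [loopSet] using h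
  · intro h
    refine ⟨fun a b _ => Subsingleton.elim a b, ?_⟩
    rw [hr]
    simpa [loopSet] using h

/-- For a rank-1 matroid `M` with loop set `L`, `I(QAut_ℐ(M))` is the
ideal of `𝔖⁺(E)` generated by the `u_{ij}` with exactly one of `i, j` in `L`; in other
words, `QAut_ℐ(M) = 𝔖⁺(L) * 𝔖⁺(E∖L)`. -/
theorem qIdeal_indep_rank_one (E : Type) [Fintype E] [Nonempty E]
    (M : Matroid E) (hM : M.E = Set.univ)
    (hrank1 : ∃ B : Set E, M.IsBase B ∧ B.ncard = 1) :
    qIdeal E (indepTuples M) = TwoSidedIdeal.span (symRels E ∪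
      {x | ∃ i j : E, Xor' (i ∈ loopSet M) (j ∈ loopSet M) ∧ x = u E i j}) := by
  unfold qIdeal
  have hset : tupleGens E (indepTuples M) =
      {x | ∃ i j : E, Xor' (i ∈ loopSet M) (j ∈ loopSet M) ∧ x = u E i j} := by
    ext x
    constructor
    · rintro ⟨k, A, B, hxor, rfl⟩
      have hle : k ≤ 1 := by
        rcases hxor with ⟨h, -⟩ | ⟨h, -⟩ <;> exact len_le_one M hrank1 h
      have hne : k ≠ 0 := by
        rintro rfl
        have : A = B := funext fun t => t.elim0
        subst this
        rcases hxor with ⟨h1, h2⟩ | ⟨h1, h2⟩ <;> exact h2 h1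
      have hk : k = 1 := by omega
      subst hk
      refine ⟨A 0, B 0, ?_, ?_⟩
      · have h1 := mem_one M A
        have h2 := mem_one M B
        rcases hxor with ⟨ha, hb⟩ | ⟨hb, ha⟩
        · exact Or.inr ⟨by rw [h2] at hb; tauto, by rw [h1] at ha; tauto⟩
        · exact Or.inl ⟨by rw [h2] at hb; tauto, by rw [h1] at ha; tauto⟩
      · simp [uProd, List.ofFn_succ]
    · rintro ⟨i, j, hxor, rfl⟩
      refine ⟨1, fun _ => i, fun _ => j, ?_, ?_⟩
      · have h1 := mem_one M (fun _ => i)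
        have h2 := mem_one M (fun _ => j)
        rcases hxor with ⟨ha, hb⟩ | ⟨hb, ha⟩
        · exact Or.inr ⟨h2.mpr (by tauto), by rw [h1]; tauto⟩
        · exact Or.inl ⟨h1.mpr (by tauto), by rw [h2]; tauto⟩
      · simp [uProd, List.ofFn_succ]
  rw [hset]

end
end

section
/- Let M be a loopless rank-2 matroid on a nonempty finite ground set E. Then the defining ideal I(QAut_ℬ(M)) equals the two-sided ideal of 𝔖⁺(E) generated by all products u_{ab}u_{cd} (a,b,c,d ∈ E) such that exactly one of the pairs {a,c}, {b,d} is a basis of M. Consequently QAut_ℬ(M) coincides with the quantum automorphism group (in Banica's sense) of the graph Γ₂[M] with vertex set E whose edges are the pairs of elements lying in distinct rank-1 flats of M. -/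
/-!
STATEMENT 11: Let M be a loopless rank-2 matroid on a nonempty finite ground set E.
Then I(QAut_ℬ(M)) equals the two-sided ideal of 𝔖⁺(E) generated by all products
u_{ab}u_{cd} such that exactly one of {a,c}, {b,d} is a basis of M.  Consequently
QAut_ℬ(M) is the quantum automorphism group (in Banica's sense) of the graph Γ₂[M]
on vertex set E whose edges are the pairs of elements lying in distinct rank-1 flats.

We model a matroid on E as a Mathlib `Matroid E` with ground set all of `E`; ideals of
𝔖⁺(E) are modelled by their preimages in ℂ⟨E²⟩, which contain the defining relations
`symRels E`.  "Rank 2" means M has a basis of cardinality 2; loopless means every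
singleton is independent.  A rank-1 flat is a flat having a basis of cardinality 1, and
`a`, `c` are adjacent in Γ₂[M] iff they lie in distinct rank-1 flats.
-/

noncomputable section

/-- A rank-1 flat: a flat possessing a basis of cardinality 1. -/
def Rank1Flat {E : Type} (M : Matroid E) (F : Set E) : Prop :=
  M.IsFlat F ∧ ∃ I : Set E, M.IsBasis I F ∧ I.ncard = 1

/-- Adjacency in the graph `Γ₂[M]`: two elements are adjacent iff they lie in distinct
rank-1 flats of `M`. -/
def graphAdj {E : Type} (M : Matroid E) (a c : E) : Prop :=
  ∃ F G : Set E, Rank1Flat M F ∧ Rank1Flat M G ∧ a ∈ F ∧ c ∈ G ∧ F ≠ G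


section Aux

variable {E : Type} [Fintype E]

lemma base_encard_two (M : Matroid E) (hrank2 : ∃ B : Set E, M.IsBase B ∧ B.ncard = 2)
    {B : Set E} (hB : M.IsBase B) : B.encard = 2 := by
  obtain ⟨B0, hB0, hcard⟩ := hrank2
  obtain ⟨x, y, hxy, rfl⟩ := Set.ncard_eq_two.mp hcard
  rw [hB.encard_eq_encard_of_isBase hB0, Set.encard_pair hxy]

lemma base_ne (M : Matroid E) (hrank2 : ∃ B : Set E, M.IsBase B ∧ B.ncard = 2)
    {a c : E} (h : M.IsBase {a, c}) : a ≠ c := by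
  rintro rfl
  have h2 := base_encard_two M hrank2 h
  simp [Set.pair_eq_singleton] at h2

lemma closure_singleton_eq (M : Matroid E) (hM : M.E = Set.univ)
    (hloopless : ∀ x : E, M.Indep {x}) {a c : E} (h : a ∈ M.closure {c}) :
    M.closure {a} = M.closure {c} := by
  have h1 : M.closure {a} ⊆ M.closure {c} :=
    M.closure_subset_closure_of_subset_closure (Set.singleton_subset_iff.mpr h)
  refine h1.antisymm (M.closure_subset_closure_of_subset_closure
    (Set.singleton_subset_iff.mpr ?_))
  have hnl : a ∉ M.closure (∅ : Set E) := by
    have := (hloopless a).notMem_closure_diff_of_mem (Set.mem_singleton a)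
    simpa using this
  have hmem : a ∈ M.closure (insert c ∅) \ M.closure ∅ := ⟨by simpa using h, hnl⟩
  have := Matroid.closure_exchange hmem
  simpa using this.1

lemma rank1flat_closure_singleton (M : Matroid E) (hM : M.E = Set.univ)
    (hloopless : ∀ x : E, M.Indep {x}) (a : E) : Rank1Flat M (M.closure {a}) := by
  refine ⟨⟨fun I X hI hIX => ?_, M.closure_subset_ground _⟩,
    {a}, (hloopless a).isBasis_closure, by simp⟩
  have h1 : X ⊆ M.closure I := hIX.subset_closure
  have h2 : M.closure I = M.closure (M.closure {a}) := hI.closure_eq_closure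
  rwa [h2, M.closure_closure] at h1

lemma rank1flat_eq (M : Matroid E) (hM : M.E = Set.univ)
    (hloopless : ∀ x : E, M.Indep {x}) {F : Set E} {a : E}
    (hF : Rank1Flat M F) (ha : a ∈ F) : F = M.closure {a} := by
  obtain ⟨hflat, I, hbasis, hcard⟩ := hF
  obtain ⟨e, rfl⟩ := Set.ncard_eq_one.mp hcard
  have hFc : F = M.closure {e} := (hbasis.closure_eq_closure.trans hflat.closure).symm
  rw [hFc, ← closure_singleton_eq M hM hloopless (hFc ▸ ha)]

lemma graphAdj_iff_closure_ne (M : Matroid E) (hM : M.E = Set.univ)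
    (hloopless : ∀ x : E, M.Indep {x}) {a c : E} :
    graphAdj M a c ↔ M.closure {a} ≠ M.closure {c} := by
  constructor
  · rintro ⟨F, G, hF, hG, haF, hcG, hne⟩ h
    exact hne ((rank1flat_eq M hM hloopless hF haF).trans
      (h.trans (rank1flat_eq M hM hloopless hG hcG).symm))
  · intro h
    exact ⟨_, _, rank1flat_closure_singleton M hM hloopless a,
      rank1flat_closure_singleton M hM hloopless c,
      M.mem_closure_self a (by rw [hM]; trivial),
      M.mem_closure_self c (by rw [hM]; trivial), h⟩

lemma base_pair_iff_closure_ne (M : Matroid E) (hM : M.E = Set.univ)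
    (hloopless : ∀ x : E, M.Indep {x})
    (hrank2 : ∃ B : Set E, M.IsBase B ∧ B.ncard = 2) {a c : E} :
    M.IsBase {a, c} ↔ M.closure {a} ≠ M.closure {c} := by
  constructor
  · intro hB h
    have hac := base_ne M hrank2 hB
    have hdiff : ({a, c} : Set E) \ {c} = {a} := by
      ext x
      simp only [Set.mem_diff, Set.mem_insert_iff, Set.mem_singleton_iff]
      constructor
      · rintro ⟨h1 | h1, h2⟩ <;> simp_all
      · rintro rfl; exact ⟨Or.inl rfl, hac⟩
    have hc : c ∉ M.closure ({a, c} \ {c}) :=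
      hB.indep.notMem_closure_diff_of_mem (by simp)
    rw [hdiff, h] at hc
    exact hc (M.mem_closure_self c (by rw [hM]; trivial))
  · intro h
    have hac : a ≠ c := fun h' => h (by rw [h'])
    have haE : a ∈ M.E := by rw [hM]; trivial
    have hnc : a ∉ M.closure {c} :=
      fun hmem => h (closure_singleton_eq M hM hloopless hmem)
    rw [(hloopless c).mem_closure_iff'] at hnc
    push_neg at hnc
    have hind : M.Indep ({a, c} : Set E) := (hnc haE).1
    obtain ⟨B, hB, hsub⟩ := hind.exists_isBase_superset
    have hBcard := base_encard_two M hrank2 hB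
    have hBeq : ({a, c} : Set E) = B :=
      (Set.toFinite _).eq_of_subset_of_encard_le hsub
        (by rw [hBcard, Set.encard_pair hac])
    rw [hBeq]
    exact hB

lemma uProd_two (A B : Fin 2 → E) :
    uProd E A B = u E (A 0) (B 0) * u E (A 1) (B 1) := by
  simp [uProd, List.ofFn_succ]

lemma range_fin_two (A : Fin 2 → E) : Set.range A = {A 0, A 1} := by
  ext x
  simp [Fin.exists_fin_two, eq_comm]

lemma mem_baseTuples_two (M : Matroid E)
    (hrank2 : ∃ B : Set E, M.IsBase B ∧ B.ncard = 2) (A : Fin 2 → E) :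
    (⟨2, A⟩ : Tup E) ∈ baseTuples M ↔ M.IsBase {A 0, A 1} := by
  constructor
  · rintro ⟨hinj, hbase⟩
    rwa [range_fin_two] at hbase
  · intro hB
    have hne : A 0 ≠ A 1 := base_ne M hrank2 hB
    refine ⟨fun x y hxy => ?_, by rwa [range_fin_two]⟩
    fin_cases x <;> fin_cases y <;> simp_all

lemma baseTuples_k_eq_two (M : Matroid E)
    (hrank2 : ∃ B : Set E, M.IsBase B ∧ B.ncard = 2) {k : ℕ} {A : Fin k → E}
    (h : (⟨k, A⟩ : Tup E) ∈ baseTuples M) : k = 2 := by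
  obtain ⟨hinj, hbase⟩ := h
  have h2 := base_encard_two M hrank2 hbase
  have hk : (Set.range A).encard = k := by
    rw [← Set.image_univ, hinj.encard_image, Set.encard_univ,
      ENat.card_eq_coe_fintype_card, Fintype.card_fin]
  rw [hk] at h2
  exact_mod_cast h2

lemma tupleGens_eq (M : Matroid E) (hM : M.E = Set.univ)
    (hloopless : ∀ x : E, M.Indep {x})
    (hrank2 : ∃ B : Set E, M.IsBase B ∧ B.ncard = 2) :
    tupleGens E (baseTuples M) =
      {x | ∃ a b c d : E,
        Xor' (M.IsBase {a, c}) (M.IsBase {b, d}) ∧ x = u E a b * u E c d} := by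
  ext x
  simp only [tupleGens, Set.mem_setOf_eq]
  constructor
  · rintro ⟨k, A, B, hxor, rfl⟩
    have hk : k = 2 := by
      rcases hxor with ⟨h, _⟩ | ⟨h, _⟩ <;>
        exact baseTuples_k_eq_two M hrank2 h
    subst hk
    refine ⟨A 0, B 0, A 1, B 1, ?_, uProd_two A B⟩
    rwa [mem_baseTuples_two M hrank2 A, mem_baseTuples_two M hrank2 B] at hxor
  · rintro ⟨a, b, c, d, hxor, rfl⟩
    refine ⟨2, ![a, c], ![b, d], ?_, ?_⟩
    · rw [mem_baseTuples_two M hrank2, mem_baseTuples_two M hrank2]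
      simpa using hxor
    · rw [uProd_two]
      simp

lemma pair_sets_eq (M : Matroid E) (hM : M.E = Set.univ)
    (hloopless : ∀ x : E, M.Indep {x})
    (hrank2 : ∃ B : Set E, M.IsBase B ∧ B.ncard = 2) :
    {x : FreeAlgebra ℂ (E × E) | ∃ a b c d : E,
        Xor' (M.IsBase {a, c}) (M.IsBase {b, d}) ∧ x = u E a b * u E c d} =
      {x | ∃ a b c d : E,
        Xor' (graphAdj M a c) (graphAdj M b d) ∧ x = u E a b * u E c d} := by
  have key : ∀ a c : E, M.IsBase {a, c} ↔ graphAdj M a c := fun a c => by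
    rw [base_pair_iff_closure_ne M hM hloopless hrank2,
      graphAdj_iff_closure_ne M hM hloopless]
  ext x
  constructor
  · rintro ⟨a, b, c, d, hxor, rfl⟩
    exact ⟨a, b, c, d, by rwa [key, key] at hxor, rfl⟩
  · rintro ⟨a, b, c, d, hxor, rfl⟩
    exact ⟨a, b, c, d, by rwa [key, key], rfl⟩

end Aux

/-- For a loopless rank-2 matroid `M`, `I(QAut_ℬ(M))` is the ideal of
`𝔖⁺(E)` generated by the products `u_{ab}u_{cd}` with exactly one of `{a,c}`, `{b,d}` a
basis of `M`; consequently `QAut_ℬ(M)` is the quantum automorphism group of the graph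
`Γ₂[M]` whose edges are the pairs lying in distinct rank-1 flats. -/
theorem qIdeal_base_rank_two (E : Type) [Fintype E] [Nonempty E]
    (M : Matroid E) (hM : M.E = Set.univ)
    (hloopless : ∀ x : E, M.Indep {x})
    (hrank2 : ∃ B : Set E, M.IsBase B ∧ B.ncard = 2) :
    qIdeal E (baseTuples M) = TwoSidedIdeal.span (symRels E ∪
      {x | ∃ a b c d : E,
        Xor' (M.IsBase {a, c}) (M.IsBase {b, d}) ∧ x = u E a b * u E c d}) ∧
    qIdeal E (baseTuples M) = TwoSidedIdeal.span (symRels E ∪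
      {x | ∃ a b c d : E,
        Xor' (graphAdj M a c) (graphAdj M b d) ∧ x = u E a b * u E c d}) := by
  constructor
  · rw [qIdeal, tupleGens_eq M hM hloopless hrank2]
  · rw [qIdeal, tupleGens_eq M hM hloopless hrank2,
      pair_sets_eq M hM hloopless hrank2]

end
end

section
/- Let M be a matroid on a nonempty finite ground set E such that every circuit of M has at least 4 elements (i.e. girth(M) ≥ 4). Then for all a,b,c,d ∈ E the identity u_{ab}u_{cd}u_{ab} = u_{ab}u_{cd} holds in QAut_ℐ(M). -/
/-!
STATEMENT 12: Let M be a matroid on a nonempty finite ground set E such that every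
circuit of M has at least 4 elements (girth(M) ≥ 4).  Then for all a,b,c,d ∈ E the
identity u_{ab}u_{cd}u_{ab} = u_{ab}u_{cd} holds in QAut_ℐ(M).

We model a matroid on E as a Mathlib `Matroid E` with ground set all of `E`, and the
defining ideal of QAut_ℐ(M) (an ideal of 𝔖⁺(E)) by its preimage `qIdeal E 𝒜` in ℂ⟨E²⟩,
where `𝒜` is the set of independent tuples.  An equation `x = y` in QAut_ℐ(M) is the
membership `x - y ∈ qIdeal E 𝒜`.  Circuits are the minimal dependent sets.
-/

noncomputable section

lemma exists_circuit_subset_aux {E : Type} [Fintype E] (M : Matroid E) (n : ℕ) :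
    ∀ s : Set E, s.ncard = n → ¬ M.Indep s → ∃ C ⊆ s, IsCircuitSet M C := by
  induction n using Nat.strong_induction_on with
  | _ n ih =>
    intro s hn hs
    by_cases hc : ∀ a ∈ s, M.Indep (s \ {a})
    · exact ⟨s, subset_refl s, hs, hc⟩
    · push_neg at hc
      obtain ⟨a, ha, hdep⟩ := hc
      have hlt : (s \ {a}).ncard < n := by
        rw [← hn]
        exact Set.ncard_lt_ncard (Set.sdiff_singleton_ssubset.mpr ha) (Set.toFinite s)
      obtain ⟨C, hCs, hC⟩ := ih _ hlt _ rfl hdep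
      exact ⟨C, hCs.trans Set.diff_subset, hC⟩

lemma indep_of_small {E : Type} [Fintype E] (M : Matroid E)
    (hgirth : ∀ C : Set E, IsCircuitSet M C → 4 ≤ C.ncard)
    (s : Set E) (h : s.ncard ≤ 3) : M.Indep s := by
  by_contra hs
  obtain ⟨C, hCs, hC⟩ := exists_circuit_subset_aux M s.ncard s rfl hs
  have := hgirth C hC
  have hle := Set.ncard_le_ncard hCs (Set.toFinite s)
  omega

/-- If every circuit of `M` has at least 4 elements, then
`u_{ab}u_{cd}u_{ab} = u_{ab}u_{cd}` holds in `QAut_ℐ(M)` for all `a, b, c, d ∈ E`. -/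
theorem uProd_idem_of_girth_ge_four (E : Type) [Fintype E] [Nonempty E]
    (M : Matroid E) (hM : M.E = Set.univ)
    (hgirth : ∀ C : Set E, IsCircuitSet M C → 4 ≤ C.ncard) :
    ∀ a b c d : E,
      u E a b * u E c d * u E a b - u E a b * u E c d
        ∈ qIdeal E (indepTuples M) := by
  intro a b c d
  classical
  set I := qIdeal E (indepTuples M) with hIdef
  have hgen : symRels E ∪ tupleGens E (indepTuples M) ⊆ I := TwoSidedIdeal.subset_span
  by_cases hac : a = c
  · subst hac
    by_cases hbd : b = d
    · subst hbd
      have h1 : u E a b * u E a b - u E a b ∈ I :=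
        hgen (Or.inl (Or.inl (Or.inl (Or.inl (Or.inl ⟨a, b, rfl⟩)))))
      have h2 := I.mul_mem_left (u E a b) _ h1
      have heq : u E a b * (u E a b * u E a b - u E a b)
          = u E a b * u E a b * u E a b - u E a b * u E a b := by noncomm_ring
      rwa [heq] at h2
    · have h1 : u E a b * u E a d ∈ I :=
        hgen (Or.inl (Or.inl (Or.inl (Or.inl (Or.inr ⟨a, b, d, hbd, rfl⟩)))))
      exact I.sub_mem (I.mul_mem_right _ _ h1) h1
  · by_cases hbd : b = d
    · subst hbd
      have h1 : u E a b * u E c b ∈ I :=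
        hgen (Or.inl (Or.inl (Or.inl (Or.inr ⟨b, a, c, hac, rfl⟩))))
      exact I.sub_mem (I.mul_mem_right _ _ h1) h1
    · have hr : (∑ k : E, u E k b) - 1 ∈ I :=
        hgen (Or.inl (Or.inl (Or.inr ⟨b, rfl⟩)))
      have hterm : ∀ e ∈ Finset.univ.erase a, u E a b * u E c d * u E e b ∈ I := by
        intro e he
        have hea : e ≠ a := Finset.ne_of_mem_erase he
        by_cases hec : e = c
        · subst hec
          have h1 : u E e d * u E e b ∈ I :=
            hgen (Or.inl (Or.inl (Or.inl (Or.inl (Or.inr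
              ⟨e, d, b, fun h => hbd h.symm, rfl⟩)))))
          rw [mul_assoc]
          exact I.mul_mem_left _ _ h1
        · have hA : (⟨3, ![a, c, e]⟩ : Tup E) ∈ indepTuples M := by
            constructor
            · intro x y hxy
              fin_cases x <;> fin_cases y <;> simp_all
            · have hrange : Set.range ![a, c, e] = insert a (insert c ({e} : Set E)) := by
                ext x
                simp [Matrix.range_cons, Matrix.range_empty]
                tauto
              rw [hrange]
              apply indep_of_small M hgirth
              have h1 := Set.ncard_insert_le a (insert c ({e} : Set E))
              have h2 := Set.ncard_insert_le c ({e} : Set E)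
              have h3 : ({e} : Set E).ncard = 1 := Set.ncard_singleton e
              omega
          have hB : (⟨3, ![b, d, b]⟩ : Tup E) ∉ indepTuples M := by
            rintro ⟨hinj, -⟩
            have h : (0 : Fin 3) = 2 := @hinj 0 2 (by simp)
            exact absurd h (by decide)
          have hmem : uProd E ![a, c, e] ![b, d, b] ∈ I :=
            hgen (Or.inr ⟨3, ![a, c, e], ![b, d, b], Or.inl ⟨hA, hB⟩, rfl⟩)
          have heq : uProd E ![a, c, e] ![b, d, b] = u E a b * u E c d * u E e b := by
            simp [uProd, List.ofFn_succ, mul_assoc]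
          rwa [heq] at hmem
      have hS : ∑ e ∈ Finset.univ.erase a, u E a b * u E c d * u E e b ∈ I :=
        sum_mem hterm
      have hr' : u E a b * u E c d * ((∑ k : E, u E k b) - 1) ∈ I :=
        I.mul_mem_left _ _ hr
      have key : u E a b * u E c d * u E a b - u E a b * u E c d
          = u E a b * u E c d * ((∑ k : E, u E k b) - 1)
            - ∑ e ∈ Finset.univ.erase a, u E a b * u E c d * u E e b := by
        rw [mul_sub, mul_one, Finset.mul_sum,
          ← Finset.add_sum_erase Finset.univ _ (Finset.mem_univ a)]
        abel
      rw [key]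
      exact I.sub_mem hr' hS


end
end

section
/- Let M be a matroid on a nonempty finite ground set E such that every circuit of M has at least 4 elements (i.e. girth(M) ≥ 4). Then the bases quantum automorphism group QAut_ℬ(M) is commutative: u_{ab}u_{cd} = u_{cd}u_{ab} holds in QAut_ℬ(M) for all a,b,c,d ∈ E. (Hence QAut_ℬ(M) = QAut_ℐ(M) = C(Aut(M)).) -/
/-!
STATEMENT 13: Let M be a matroid on a nonempty finite ground set E such that every
circuit of M has at least 4 elements (girth(M) ≥ 4).  Then QAut_ℬ(M) is commutative:
u_{ab}u_{cd} = u_{cd}u_{ab} in QAut_ℬ(M) for all a,b,c,d ∈ E.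
(Hence QAut_ℬ(M) = QAut_ℐ(M) = C(Aut(M)).)

We model a matroid on E as a Mathlib `Matroid E` with ground set all of `E`, and the
defining ideal of QAut_ℬ(M) (an ideal of 𝔖⁺(E)) by its preimage `qIdeal E 𝒜` in ℂ⟨E²⟩,
where `𝒜` is the set of basis tuples.  An equation `x = y` in QAut_ℬ(M) is the
membership `x - y ∈ qIdeal E 𝒜`.  Circuits are the minimal dependent sets.
-/

noncomputable section

/-! ## Auxiliary material for the proof -/

namespace Statement13

open Function

variable {E : Type} [Fintype E]

/-- The product `u_{A₁B₁} ⋯ u_{AkBk}` along two lists. -/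
def luF (LA LB : List E) : FreeAlgebra ℂ (E × E) :=
  ((LA.zip LB).map fun ij => u E ij.1 ij.2).prod

lemma luF_nil : luF ([] : List E) [] = 1 := rfl

lemma luF_cons (a b : E) (LA LB : List E) :
    luF (a :: LA) (b :: LB) = u E a b * luF LA LB := by
  simp [luF]

lemma luF_append (LA LB LC LD : List E) (h : LA.length = LB.length) :
    luF (LA ++ LC) (LB ++ LD) = luF LA LB * luF LC LD := by
  simp [luF, List.zip_append h]

lemma luF_eq_uProd (LA LB : List E) :
    luF LA LB
      = uProd E (fun i => ((LA.zip LB).get i).1) (fun i => ((LA.zip LB).get i).2) := by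
  unfold luF uProd
  congr 1
  conv_lhs => rw [← List.ofFn_get (LA.zip LB)]
  rw [List.map_ofFn]
  rfl

/-- A list is a "basis list" if it has no repetitions and its set of entries is a
basis of `M`. -/
def IsBaseList (M : Matroid E) (L : List E) : Prop :=
  L.Nodup ∧ M.IsBase {x | x ∈ L}

lemma mem_baseTuples_list (M : Matroid E) (L : List E) {k : ℕ} (hk : k = L.length)
    (A : Fin k → E) (hA : A = L.get ∘ (finCongr hk)) :
    ((⟨k, A⟩ : Tup E) ∈ baseTuples M) ↔ IsBaseList M L := by
  subst hA
  show (Injective (L.get ∘ (finCongr hk)) ∧ M.IsBase (Set.range (L.get ∘ (finCongr hk))))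
    ↔ IsBaseList M L
  rw [Equiv.injective_comp, (finCongr hk).surjective.range_comp]
  have h1 : Injective L.get ↔ L.Nodup := List.nodup_iff_injective_get.symm
  have h2 : Set.range L.get = {x | x ∈ L} := by
    ext x
    simp [List.mem_iff_get, Set.mem_range, eq_comm]
  rw [h1, h2]
  rfl

lemma luF_mem_qIdeal (M : Matroid E) (LA LB : List E) (h : LA.length = LB.length)
    (hx : Xor' (IsBaseList M LA) (IsBaseList M LB)) :
    luF LA LB ∈ qIdeal E (baseTuples M) := by
  apply TwoSidedIdeal.subset_span
  refine Or.inr ?_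
  have hkA : (LA.zip LB).length = LA.length := by simp [h]
  have hkB : (LA.zip LB).length = LB.length := by simp [h]
  refine ⟨(LA.zip LB).length, (fun i => ((LA.zip LB).get i).1),
    (fun i => ((LA.zip LB).get i).2), ?_, luF_eq_uProd LA LB⟩
  have e1 : ((⟨(LA.zip LB).length, fun i => ((LA.zip LB).get i).1⟩ : Tup E) ∈ baseTuples M)
      ↔ IsBaseList M LA := by
    refine mem_baseTuples_list M LA hkA _ ?_
    funext i
    simp [List.get_eq_getElem, List.getElem_zip]
  have e2 : ((⟨(LA.zip LB).length, fun i => ((LA.zip LB).get i).2⟩ : Tup E) ∈ baseTuples M)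
      ↔ IsBaseList M LB := by
    refine mem_baseTuples_list M LB hkB _ ?_
    funext i
    simp [List.get_eq_getElem, List.getElem_zip]
  rw [e1, e2]
  exact hx

/-- Any set of at most 3 elements in a matroid of girth ≥ 4 is independent. -/
lemma indep_of_ncard_le_three (M : Matroid E)
    (hgirth : ∀ C : Set E, IsCircuitSet M C → 4 ≤ C.ncard)
    (s : Set E) (hs : s.ncard ≤ 3) : M.Indep s := by
  classical
  by_contra hdep
  have hne : (Finset.univ.filter
      (fun C : Finset E => ↑C ⊆ s ∧ ¬ M.Indep (↑C : Set E))).Nonempty := by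
    refine ⟨s.toFinite.toFinset, ?_⟩
    simp only [Finset.mem_filter, Finset.mem_univ, true_and, Set.Finite.coe_toFinset]
    exact ⟨subset_rfl, hdep⟩
  obtain ⟨C, hC, hmin⟩ :=
    (Finset.univ.filter
      (fun C : Finset E => ↑C ⊆ s ∧ ¬ M.Indep (↑C : Set E))).exists_min_image
      (fun C => C.card) hne
  simp only [Finset.mem_filter, Finset.mem_univ, true_and] at hC
  have hcirc : IsCircuitSet M ↑C := by
    refine ⟨hC.2, fun a ha => ?_⟩
    by_contra hnd
    have hmem : C.erase a ∈ Finset.univ.filter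
        (fun C : Finset E => ↑C ⊆ s ∧ ¬ M.Indep (↑C : Set E)) := by
      simp only [Finset.mem_filter, Finset.mem_univ, true_and]
      constructor
      · exact subset_trans (by exact_mod_cast Finset.coe_subset.mpr (Finset.erase_subset a C)) hC.1
      · rwa [Finset.coe_erase]
    have hlt : (C.erase a).card < C.card :=
      Finset.card_erase_lt_of_mem (by exact_mod_cast ha)
    have := hmin _ hmem
    omega
  have h4 := hgirth _ hcirc
  rw [Set.ncard_coe_finset] at h4
  have hle : (↑C : Set E).ncard ≤ s.ncard := Set.ncard_le_ncard hC.1 s.toFinite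
  rw [Set.ncard_coe_finset] at hle
  omega

section Quot

variable (M : Matroid E)

/-- The congruence defining the quotient `QAut_ℬ(M)`-presentation. -/
def qc : RingCon (FreeAlgebra ℂ (E × E)) := (qIdeal E (baseTuples M)).ringCon

/-- The quotient map. -/
def qphi : FreeAlgebra ℂ (E × E) →+* (qc M).Quotient := (qc M).mk'

lemma qphi_zero_of_mem {x : FreeAlgebra ℂ (E × E)}
    (hx : x ∈ qIdeal E (baseTuples M)) : qphi M x = 0 := by
  have h : (qc M) x 0 := hx
  have h2 : ((x : (qc M).Quotient)) = ((0 : FreeAlgebra ℂ (E × E)) : (qc M).Quotient) :=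
    (RingCon.eq (qc M)).mpr h
  exact (by simpa using h2 : ((x : (qc M).Quotient)) = 0)

lemma qphi_symRel_zero {x : FreeAlgebra ℂ (E × E)} (hx : x ∈ symRels E) :
    qphi M x = 0 :=
  qphi_zero_of_mem M (TwoSidedIdeal.subset_span (Or.inl hx))

/-- The image of a generator in the quotient. -/
def pp (i j : E) : (qc M).Quotient := qphi M (u E i j)

lemma pp_row_orth (i k l : E) (h : k ≠ l) : pp M i k * pp M i l = 0 := by
  have := qphi_symRel_zero M (x := u E i k * u E i l)
    (Or.inl (Or.inl (Or.inl (Or.inr ⟨i, k, l, h, rfl⟩))))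
  rw [map_mul] at this
  exact this

lemma pp_col_orth (j k l : E) (h : k ≠ l) : pp M k j * pp M l j = 0 := by
  have := qphi_symRel_zero M (x := u E k j * u E l j)
    (Or.inl (Or.inl (Or.inr ⟨j, k, l, h, rfl⟩)))
  rw [map_mul] at this
  exact this

lemma pp_col_sum (j : E) : ∑ w : E, pp M w j = 1 := by
  have := qphi_symRel_zero M (x := (∑ k : E, u E k j) - 1)
    (Or.inl (Or.inr ⟨j, rfl⟩))
  rw [map_sub, map_sum, map_one, sub_eq_zero] at this
  exact this

lemma pp_row_sum (i : E) : ∑ w : E, pp M i w = 1 := by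
  have := qphi_symRel_zero M (x := (∑ k : E, u E i k) - 1)
    (Or.inr ⟨i, rfl⟩)
  rw [map_sub, map_sum, map_one, sub_eq_zero] at this
  exact this

lemma prodsum_eq_one (Ys : List E) :
    (Ys.map fun y => ∑ w : E, pp M w y).prod = 1 := by
  induction Ys with
  | nil => simp
  | cons y ys ih => rw [List.map_cons, List.prod_cons, pp_col_sum, one_mul, ih]

lemma kill_aux (Ys : List E) :
    ∀ x : (qc M).Quotient,
      (∀ Ws : List E, Ws.length = Ys.length → x * qphi M (luF Ws Ys) = 0) →
      x * ((Ys.map fun y => ∑ w : E, pp M w y).prod) = 0 := by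
  induction Ys with
  | nil =>
    intro x h
    simpa [luF_nil] using h [] rfl
  | cons y ys ih =>
    intro x h
    rw [List.map_cons, List.prod_cons, ← mul_assoc, Finset.mul_sum, Finset.sum_mul]
    refine Finset.sum_eq_zero fun w _ => ?_
    refine ih (x * pp M w y) fun Ws hW => ?_
    have := h (w :: Ws) (by simp [hW])
    rw [luF_cons, map_mul] at this
    rw [mul_assoc]
    exact this

lemma kill (Ys : List E) (x : (qc M).Quotient)
    (h : ∀ Ws : List E, Ws.length = Ys.length → x * qphi M (luF Ws Ys) = 0) :
    x = 0 := by
  have := kill_aux M Ys x h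
  rwa [prodsum_eq_one, mul_one] at this

/-- The key lemma: `p_{ab} p_{cd} p_{az} = 0` for pairwise distinct `b, d, z`. -/
lemma key (hgirth : ∀ C : Set E, IsCircuitSet M C → 4 ≤ C.ncard)
    (a c b d z : E) (hbd : b ≠ d) (hbz : b ≠ z) (hdz : d ≠ z) :
    pp M a b * pp M c d * pp M a z = 0 := by
  classical
  have hindep : M.Indep {b, d, z} := by
    refine indep_of_ncard_le_three M hgirth _ ?_
    have h1 := Set.ncard_insert_le b ({d, z} : Set E)
    have h2 := Set.ncard_insert_le d ({z} : Set E)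
    have h3 : ({z} : Set E).ncard = 1 := Set.ncard_singleton z
    omega
  obtain ⟨S, hS, hsub⟩ := hindep.exists_isBase_superset
  have hfin : (S \ {b, d, z}).Finite := Set.toFinite _
  set Ys : List E := hfin.toFinset.toList with hYs
  have hYmem : ∀ x, x ∈ Ys ↔ x ∈ S \ ({b, d, z} : Set E) := by
    intro x
    rw [hYs, Finset.mem_toList, Set.Finite.mem_toFinset]
  have hx : pp M a b * pp M c d * pp M a z = qphi M (luF [a, c, a] [b, d, z]) := by
    rw [show luF [a, c, a] [b, d, z] = u E a b * (u E c d * (u E a z * 1)) from rfl]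
    simp only [map_mul, map_one, mul_one]
    rw [mul_assoc]
    rfl
  rw [hx]
  refine kill M Ys _ ?_
  intro Ws hW
  rw [← map_mul, ← luF_append [a, c, a] [b, d, z] Ws Ys rfl]
  apply qphi_zero_of_mem
  refine luF_mem_qIdeal M _ _ (by simp [hW]) ?_
  refine Or.inr ⟨⟨?_, ?_⟩, ?_⟩
  · -- Nodup (b :: d :: z :: Ys)
    have hbY : b ∉ Ys := fun hb => by
      have := (hYmem b).mp hb
      exact this.2 (by simp)
    have hdY : d ∉ Ys := fun hd => by
      have := (hYmem d).mp hd
      exact this.2 (by simp)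
    have hzY : z ∉ Ys := fun hz => by
      have := (hYmem z).mp hz
      exact this.2 (by simp)
    have hnd : Ys.Nodup := Finset.nodup_toList _
    simp only [List.cons_append, List.nil_append, List.nodup_cons, List.mem_cons]
    refine ⟨?_, ?_, ?_⟩
    · push_neg
      exact ⟨hbd, hbz, hbY⟩
    · push_neg
      exact ⟨hdz, hdY⟩
    · exact ⟨hzY, hnd⟩
  · -- Base
    have hset : {x | x ∈ ([b, d, z] ++ Ys : List E)} = S := by
      ext x
      simp only [List.cons_append, List.nil_append, List.mem_cons, Set.mem_setOf_eq]
      rw [hYmem x]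
      constructor
      · rintro (rfl | rfl | rfl | hx)
        · exact hsub (by simp)
        · exact hsub (by simp)
        · exact hsub (by simp)
        · exact hx.1
      · intro hxS
        by_cases hb : x = b
        · exact Or.inl hb
        by_cases hd : x = d
        · exact Or.inr (Or.inl hd)
        by_cases hz : x = z
        · exact Or.inr (Or.inr (Or.inl hz))
        · refine Or.inr (Or.inr (Or.inr ⟨hxS, ?_⟩))
          simp only [Set.mem_insert_iff, Set.mem_singleton_iff]
          push_neg
          exact ⟨hb, hd, hz⟩
    rw [hset]
    exact hS
  · -- rows not a base list: repetition
    rintro ⟨hnd, -⟩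
    simp at hnd

end Quot

end Statement13

open Statement13 in
/-- If every circuit of `M` has at least 4 elements, then the bases
quantum automorphism group `QAut_ℬ(M)` is commutative:
`u_{ab}u_{cd} = u_{cd}u_{ab}` in `QAut_ℬ(M)` for all `a, b, c, d ∈ E`
(hence `QAut_ℬ(M) = QAut_ℐ(M) = C(Aut(M))`). -/
theorem qIdeal_base_commutative_of_girth_ge_four (E : Type) [Fintype E] [Nonempty E]
    (M : Matroid E) (hM : M.E = Set.univ)
    (hgirth : ∀ C : Set E, IsCircuitSet M C → 4 ≤ C.ncard) :
    ∀ a b c d : E,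
      u E a b * u E c d - u E c d * u E a b ∈ qIdeal E (baseTuples M) := by
  classical
  intro a b c d
  have main : qphi M (u E a b * u E c d) = qphi M (u E c d * u E a b) := by
    rw [map_mul, map_mul]
    show pp M a b * pp M c d = pp M c d * pp M a b
    by_cases hac : a = c
    · subst hac
      by_cases hbd : b = d
      · subst hbd; rfl
      · rw [pp_row_orth M a b d hbd, pp_row_orth M a d b (Ne.symm hbd)]
    · by_cases hbd : b = d
      · subst hbd
        rw [pp_col_orth M b a c hac, pp_col_orth M b c a (Ne.symm hac)]
      · -- main case
        have L1 : pp M a b * pp M c d = pp M a b * pp M c d * pp M a b := by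
          calc pp M a b * pp M c d = (pp M a b * pp M c d) * 1 := (mul_one _).symm
            _ = (pp M a b * pp M c d) * (∑ w : E, pp M a w) := by rw [pp_row_sum]
            _ = ∑ w : E, pp M a b * pp M c d * pp M a w := by rw [Finset.mul_sum]
            _ = pp M a b * pp M c d * pp M a b := by
                refine Finset.sum_eq_single_of_mem b (Finset.mem_univ b) ?_
                intro z _ hz
                by_cases hzd : z = d
                · subst hzd
                  rw [mul_assoc, pp_col_orth M z c a (fun h => hac h.symm), mul_zero]
                · exact key M hgirth a c b d z hbd (Ne.symm hz) (fun h => hzd h.symm)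
        have L2 : pp M c d * pp M a b = pp M a b * pp M c d * pp M a b := by
          calc pp M c d * pp M a b = 1 * (pp M c d * pp M a b) := (one_mul _).symm
            _ = (∑ w : E, pp M a w) * (pp M c d * pp M a b) := by rw [pp_row_sum]
            _ = ∑ w : E, pp M a w * (pp M c d * pp M a b) := by rw [Finset.sum_mul]
            _ = pp M a b * (pp M c d * pp M a b) := by
                refine Finset.sum_eq_single_of_mem b (Finset.mem_univ b) ?_
                intro z _ hz
                by_cases hzd : z = d
                · subst hzd
                  rw [← mul_assoc, pp_col_orth M z a c hac, zero_mul]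
                · rw [← mul_assoc]
                  exact key M hgirth a c z d b hzd hz (Ne.symm hbd)
            _ = pp M a b * pp M c d * pp M a b := (mul_assoc _ _ _).symm
        rw [L1, L2]
  have hrel : (qc M) (u E a b * u E c d) (u E c d * u E a b) := (RingCon.eq (qc M)).mp main
  exact ((qIdeal E (baseTuples M)).rel_iff _ _).mp hrel

end
end

section
/- Two matroids M₁ and M₂ on nonempty finite ground sets are isomorphic if and only if there exist a surjective strong map φ₁ : M₁ → M₂ and a surjective strong map φ₂ : M₂ → M₁. -/
/-!
STATEMENT 15: Two matroids M₁ and M₂ on nonempty finite ground sets are isomorphic if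
and only if there exist surjective strong maps φ₁ : M₁ → M₂ and φ₂ : M₂ → M₁.

We model a matroid on a nonempty finite ground set as a Mathlib `Matroid α` over a
nonempty finite type `α`, with ground set all of `α`.  The extra loop `e` adjoined to
the ground set is modelled by `none : Option α`; since the flats of M∘ (M with the loop
e adjoined) are exactly the sets F ∪ {e} for F a flat of M, a strong map M₁ → M₂ is a
function φ : Option α → Option β with φ(none) = none such that for every flat F of M₂,
the trace on α of the φ-preimage of F ∪ {none} is a flat of M₁.
-/

/-- Matroid isomorphism (for matroids whose ground set is the whole type):
a bijection of the ground sets mapping bases to bases, whose inverse also maps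
bases to bases. -/
def MatroidIso {α β : Type} (M : Matroid α) (N : Matroid β) : Prop :=
  ∃ e : α ≃ β, ∀ B : Set α, M.IsBase B ↔ N.IsBase (e '' B)

/-- A strong map `M → N`: a function `φ` on the ground sets with the loop `e = none`
adjoined, fixing `e`, such that the preimage of every flat of `N∘` is a flat of `M∘`. -/
def IsStrongMap {α β : Type} (M : Matroid α) (N : Matroid β)
    (φ : Option α → Option β) : Prop :=
  φ none = none ∧
  ∀ F : Set β, N.IsFlat F →
    M.IsFlat {x : α | φ (some x) ∈ insert none (Option.some '' F)}

section Aux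

open Set

/-- Two matroids on the same ground set with the same flats are equal. -/
lemma matroid_ext_flat {α : Type*} {M N : Matroid α} (hE : M.E = N.E)
    (h : ∀ F, M.IsFlat F ↔ N.IsFlat F) : M = N := by
  apply Matroid.ext_closure
  intro X
  rw [Matroid.closure_def, Matroid.closure_def, hE]
  congr 1
  ext F
  simp [h]

lemma mapEquiv_flat_iff {α β : Type*} (M : Matroid α) (f : α ≃ β) (F : Set β) :
    (M.mapEquiv f).IsFlat F ↔ M.IsFlat (f.symm '' F) := by
  constructor
  · intro hF
    refine ⟨fun I X hI hX ↦ ?_, ?_⟩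
    · have hI' : (M.mapEquiv f).IsBasis (f '' I) F := by
        rw [Matroid.mapEquiv_isBasis_iff]; simpa using hI
      have hX' : (M.mapEquiv f).IsBasis (f '' I) (f '' X) := by
        rw [Matroid.mapEquiv_isBasis_iff]; simpa using hX
      have := hF.subset_of_isBasis_of_isBasis hI' hX'
      calc X = f.symm '' (f '' X) := by simp
        _ ⊆ f.symm '' F := image_mono this
    · have := hF.subset_ground
      rw [Matroid.mapEquiv_ground_eq] at this
      intro x hx
      obtain ⟨y, hy, rfl⟩ := hx
      obtain ⟨z, hz, hzy⟩ := this hy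
      simpa [← hzy] using hz
  · intro hF
    refine ⟨fun I X hI hX ↦ ?_, ?_⟩
    · rw [Matroid.mapEquiv_isBasis_iff] at hI hX
      have := hF.subset_of_isBasis_of_isBasis hI hX
      intro x hx
      have : f.symm x ∈ f.symm '' F := this ⟨x, hx, rfl⟩
      obtain ⟨y, hy, hyx⟩ := this
      have : y = x := f.symm.injective hyx
      rwa [← this]
    · intro x hx
      have : f.symm x ∈ M.E := hF.subset_ground ⟨x, hx, rfl⟩
      rw [Matroid.mapEquiv_ground_eq]
      exact ⟨f.symm x, this, by simp⟩

lemma equiv_symm_image_eq_preimage {α β : Type*} (e : α ≃ β) (F : Set β) :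
    e.symm '' F = e ⁻¹' F := by
  ext x; simp [Equiv.symm_apply_eq, eq_comm]

/-- From a flat-preimage-preserving bijection we get a surjective strong map. -/
lemma strongMap_of_equiv {α β : Type} (M : Matroid α) (N : Matroid β) (e : α ≃ β)
    (h : ∀ F, N.IsFlat F → M.IsFlat (e ⁻¹' F)) :
    IsStrongMap M N (Option.map e) ∧ Function.Surjective (Option.map e) := by
  refine ⟨⟨rfl, fun F hF ↦ ?_⟩, fun b ↦ ?_⟩
  · have hset : {x : α | (Option.map e) (some x) ∈ insert none (Option.some '' F)}
        = e ⁻¹' F := by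
      ext x
      simp
    rw [hset]
    exact h F hF
  · match b with
    | none => exact ⟨none, rfl⟩
    | some y => exact ⟨some (e.symm y), by simp⟩

end Aux

/-- Two matroids on nonempty finite ground sets are isomorphic iff
there are surjective strong maps in both directions. -/
theorem matroidIso_iff_surj_strongMaps {α β : Type}
    [Fintype α] [Nonempty α] [Fintype β] [Nonempty β]
    (M₁ : Matroid α) (M₂ : Matroid β) (h₁ : M₁.E = Set.univ) (h₂ : M₂.E = Set.univ) :
    MatroidIso M₁ M₂ ↔
      ((∃ φ : Option α → Option β, IsStrongMap M₁ M₂ φ ∧ Function.Surjective φ) ∧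
       (∃ ψ : Option β → Option α, IsStrongMap M₂ M₁ ψ ∧ Function.Surjective ψ)) := by
  constructor
  · rintro ⟨e, he⟩
    -- `M₂` is the image of `M₁` under `e`.
    have hME : M₂ = M₁.mapEquiv e := by
      apply Matroid.ext_isBase
      · rw [h₂, Matroid.mapEquiv_ground_eq, h₁, Set.image_univ, Equiv.range_eq_univ]
      · intro B _
        rw [Matroid.mapEquiv_isBase_iff, he (e.symm '' B), Equiv.image_symm_image]
    have hflat₁ : ∀ F, M₂.IsFlat F → M₁.IsFlat (e ⁻¹' F) := by
      intro F hF
      rw [hME, mapEquiv_flat_iff, equiv_symm_image_eq_preimage] at hF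
      exact hF
    have hflat₂ : ∀ G, M₁.IsFlat G → M₂.IsFlat (e.symm ⁻¹' G) := by
      intro G hG
      rw [hME, mapEquiv_flat_iff, equiv_symm_image_eq_preimage]
      have : e ⁻¹' (e.symm ⁻¹' G) = G := by
        ext x; simp
      rwa [this]
    exact ⟨⟨_, strongMap_of_equiv M₁ M₂ e hflat₁⟩, ⟨_, strongMap_of_equiv M₂ M₁ e.symm hflat₂⟩⟩
  · rintro ⟨⟨φ, hφ, hφs⟩, ⟨ψ, hψ, hψs⟩⟩
    -- `φ` and `ψ` are bijections.
    have hcard : Fintype.card (Option α) = Fintype.card (Option β) :=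
      le_antisymm (Fintype.card_le_of_surjective ψ hψs) (Fintype.card_le_of_surjective φ hφs)
    have hφb : Function.Bijective φ :=
      (Fintype.bijective_iff_surjective_and_card φ).2 ⟨hφs, hcard⟩
    have hψb : Function.Bijective ψ :=
      (Fintype.bijective_iff_surjective_and_card ψ).2 ⟨hψs, hcard.symm⟩
    set Φ : Option α ≃ Option β := Equiv.ofBijective φ hφb with hΦ
    set Ψ : Option β ≃ Option α := Equiv.ofBijective ψ hψb with hΨ
    set e : α ≃ β := Equiv.removeNone Φ with hedef
    set g : β ≃ α := Equiv.removeNone Ψ with hgdef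
    have hΦnone : Φ none = none := hφ.1
    have hΨnone : Ψ none = none := hψ.1
    have hekey : ∀ a : α, φ (some a) = some (e a) := by
      intro a
      have hne : Φ (some a) ≠ none := by
        intro h
        have := Φ.injective (h.trans hΦnone.symm)
        simp at this
      obtain ⟨b, hb⟩ := Option.ne_none_iff_exists'.1 hne
      have := Equiv.removeNone_aux_some Φ (x := a) ⟨b, hb⟩
      exact this.symm
    have hgkey : ∀ b : β, ψ (some b) = some (g b) := by
      intro b
      have hne : Ψ (some b) ≠ none := by
        intro h
        have := Ψ.injective (h.trans hΨnone.symm)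
        simp at this
      obtain ⟨a, ha⟩ := Option.ne_none_iff_exists'.1 hne
      have := Equiv.removeNone_aux_some Ψ (x := b) ⟨a, ha⟩
      exact this.symm
    -- flat preimage conditions
    have hflat₁ : ∀ F, M₂.IsFlat F → M₁.IsFlat (e ⁻¹' F) := by
      intro F hF
      have := hφ.2 F hF
      have hset : {x : α | φ (some x) ∈ insert none (Option.some '' F)} = e ⁻¹' F := by
        ext x
        simp [hekey x]
      rwa [hset] at this
    have hflat₂ : ∀ G, M₁.IsFlat G → M₂.IsFlat (g ⁻¹' G) := by
      intro G hG
      have := hψ.2 G hG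
      have hset : {y : β | ψ (some y) ∈ insert none (Option.some '' G)} = g ⁻¹' G := by
        ext y
        simp [hgkey y]
      rwa [hset] at this
    -- counting flats: the preimage maps are injective, hence bijective
    haveI : Finite (Set α) := inferInstance
    haveI : Finite (Set β) := inferInstance
    haveI : Fintype {F : Set α // M₁.IsFlat F} := Fintype.ofFinite _
    haveI : Fintype {F : Set β // M₂.IsFlat F} := Fintype.ofFinite _
    let u : {F : Set β // M₂.IsFlat F} → {F : Set α // M₁.IsFlat F} :=
      fun F ↦ ⟨e ⁻¹' F.1, hflat₁ _ F.2⟩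
    let v : {F : Set α // M₁.IsFlat F} → {F : Set β // M₂.IsFlat F} :=
      fun G ↦ ⟨g ⁻¹' G.1, hflat₂ _ G.2⟩
    have hu : Function.Injective u := by
      intro F F' hFF'
      have := congrArg Subtype.val hFF'
      exact Subtype.ext (e.surjective.preimage_injective this)
    have hv : Function.Injective v := by
      intro G G' hGG'
      have := congrArg Subtype.val hGG'
      exact Subtype.ext (g.surjective.preimage_injective this)
    have hcardF : Fintype.card {F : Set β // M₂.IsFlat F} = Fintype.card {F : Set α // M₁.IsFlat F} :=
      le_antisymm (Fintype.card_le_of_injective u hu) (Fintype.card_le_of_injective v hv)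
    have husurj : Function.Surjective u :=
      ((Fintype.bijective_iff_injective_and_card u).2 ⟨hu, hcardF⟩).2
    -- `M₂` and `M₁.mapEquiv e` have the same flats, hence are equal
    have hME : M₁.mapEquiv e = M₂ := by
      apply matroid_ext_flat
      · rw [h₂, Matroid.mapEquiv_ground_eq, h₁, Set.image_univ, Equiv.range_eq_univ]
      · intro F
        rw [mapEquiv_flat_iff, equiv_symm_image_eq_preimage]
        constructor
        · intro hF
          obtain ⟨F', hF'⟩ := husurj ⟨e ⁻¹' F, hF⟩
          have hF'val : e ⁻¹' F'.1 = e ⁻¹' F := congrArg Subtype.val hF'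
          have : F'.1 = F := e.surjective.preimage_injective hF'val
          rw [← this]
          exact F'.2
        · exact hflat₁ F
    refine ⟨e, fun B ↦ ?_⟩
    rw [← hME, Matroid.mapEquiv_isBase_iff, Equiv.symm_image_image]
end
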